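/- arXiv:2102.02037 — 6 statements merged into one kernel-verified Lean document; each statement's English description precedes it below -/
import Mathlib

section
/- Let E be a separable real Hilbert space and let 1 ≤ p < ∞. For any isometry Φ : W_p(E) → W_p(E) of the p-Wasserstein space W_p(E) there exists a surjective isometry ψ : E → E such that Φ(δ_x) = δ_{ψ(x)} for all x ∈ E, where δ_x denotes the Dirac measure at x. -/
open MeasureTheory ENNReal Topology Filter
open scoped RealInnerProductSpace

noncomputable section

/-- The `p`-Wasserstein "distance" (valued in `ℝ≥0∞`) between two Borel measures on a
metric space: `(inf over couplings π of ∫ ρ(x,y)^p dπ)^(min (1/p) 1)`. -/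
noncomputable def wassersteinDist {X : Type*} [MeasurableSpace X] [PseudoEMetricSpace X]
    (p : ℝ) (μ ν : Measure X) : ℝ≥0∞ :=
  (⨅ π ∈ {π : Measure (X × X) | π.map Prod.fst = μ ∧ π.map Prod.snd = ν},
    ∫⁻ z, edist z.1 z.2 ^ p ∂π) ^ min p⁻¹ 1

/-- Membership in the `p`-Wasserstein space: a Borel probability measure with a finite
`p`-th moment. -/
def MemWp {X : Type*} [MeasurableSpace X] [PseudoEMetricSpace X] (p : ℝ) (μ : Measure X) : Prop :=
  IsProbabilityMeasure μ ∧ ∃ x₀ : X, ∫⁻ x, edist x x₀ ^ p ∂μ ≠ ⊤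

section Aux
set_option linter.unusedSectionVars false

variable {E : Type*} [NormedAddCommGroup E] [InnerProductSpace ℝ E]
  [SecondCountableTopology E] [MeasurableSpace E] [BorelSpace E] {p : ℝ}

lemma wpaux_meas1 (x : E) : Measurable (fun y : E => edist x y ^ p) :=
  ENNReal.continuous_rpow_const.measurable.comp (measurable_const.edist measurable_id)

lemma wpaux_meas1' (x : E) : Measurable (fun y : E => edist y x ^ p) :=
  ENNReal.continuous_rpow_const.measurable.comp (measurable_id.edist measurable_const)

lemma wpaux_meascost : Measurable (fun z : E × E => edist z.1 z.2 ^ p) :=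
  ENNReal.continuous_rpow_const.measurable.comp (measurable_fst.edist measurable_snd)

lemma wpaux_wdist_eq (hp : 1 ≤ p) (μ ν : Measure E) :
    wassersteinDist p μ ν =
      (⨅ π ∈ {π : Measure (E × E) | π.map Prod.fst = μ ∧ π.map Prod.snd = ν},
        ∫⁻ z, edist z.1 z.2 ^ p ∂π) ^ p⁻¹ := by
  have h0 : (0:ℝ) < p := lt_of_lt_of_le one_pos hp
  have : p⁻¹ ≤ 1 := by
    rw [inv_le_one_iff₀]; right; exact hp
  rw [wassersteinDist, min_eq_left this]

lemma wpaux_lint_fst {π : Measure (E × E)} {μ : Measure E} (h : π.map Prod.fst = μ)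
    {φ : E → ℝ≥0∞} (hφ : Measurable φ) : ∫⁻ z, φ z.1 ∂π = ∫⁻ x, φ x ∂μ := by
  rw [← h, lintegral_map hφ measurable_fst]

lemma wpaux_lint_snd {π : Measure (E × E)} {ν : Measure E} (h : π.map Prod.snd = ν)
    {φ : E → ℝ≥0∞} (hφ : Measurable φ) : ∫⁻ z, φ z.2 ∂π = ∫⁻ x, φ x ∂ν := by
  rw [← h, lintegral_map hφ measurable_snd]

lemma wpaux_wdist_le_coupling (hp : 1 ≤ p) {μ ν : Measure E} {π : Measure (E × E)}
    (h1 : π.map Prod.fst = μ) (h2 : π.map Prod.snd = ν) :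
    wassersteinDist p μ ν ≤ (∫⁻ z, edist z.1 z.2 ^ p ∂π) ^ p⁻¹ := by
  rw [wpaux_wdist_eq hp]
  exact ENNReal.rpow_le_rpow (biInf_le _ (Set.mem_setOf_eq ▸ ⟨h1, h2⟩))
    (by positivity)

lemma wpaux_cost_dirac_left {ν : Measure E} (x : E) {π : Measure (E × E)}
    (h1 : π.map Prod.fst = Measure.dirac x) (h2 : π.map Prod.snd = ν) :
    ∫⁻ z, edist z.1 z.2 ^ p ∂π = ∫⁻ y, edist x y ^ p ∂ν := by
  have hae : ∀ᵐ z ∂π, z.1 = x := by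
    rw [ae_iff]
    have : {z : E × E | ¬ z.1 = x} = Prod.fst ⁻¹' {x}ᶜ := rfl
    rw [this, ← Measure.map_apply measurable_fst (measurableSet_singleton x).compl, h1,
      Measure.dirac_apply' x (measurableSet_singleton x).compl]
    simp
  have : ∫⁻ z, edist z.1 z.2 ^ p ∂π = ∫⁻ z, edist x z.2 ^ p ∂π := by
    refine lintegral_congr_ae ?_
    filter_upwards [hae] with z hz
    rw [hz]
  rw [this, wpaux_lint_snd h2 (wpaux_meas1 x)]

lemma wpaux_cost_dirac_right {μ : Measure E} (x : E) {π : Measure (E × E)}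
    (h1 : π.map Prod.fst = μ) (h2 : π.map Prod.snd = Measure.dirac x) :
    ∫⁻ z, edist z.1 z.2 ^ p ∂π = ∫⁻ y, edist y x ^ p ∂μ := by
  have hae : ∀ᵐ z ∂π, z.2 = x := by
    rw [ae_iff]
    have : {z : E × E | ¬ z.2 = x} = Prod.snd ⁻¹' {x}ᶜ := rfl
    rw [this, ← Measure.map_apply measurable_snd (measurableSet_singleton x).compl, h2,
      Measure.dirac_apply' x (measurableSet_singleton x).compl]
    simp
  have : ∫⁻ z, edist z.1 z.2 ^ p ∂π = ∫⁻ z, edist z.1 x ^ p ∂π := by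
    refine lintegral_congr_ae ?_
    filter_upwards [hae] with z hz
    rw [hz]
  rw [this, wpaux_lint_fst h1 (wpaux_meas1' x)]

lemma wpaux_wdist_dirac_left (hp : 1 ≤ p) (x : E) (ν : Measure E)
    (hν : IsProbabilityMeasure ν) :
    wassersteinDist p (Measure.dirac x) ν = (∫⁻ y, edist x y ^ p ∂ν) ^ p⁻¹ := by
  rw [wpaux_wdist_eq hp]
  congr 1
  refine le_antisymm ?_ ?_
  · have hmem : (Measure.dirac x).prod ν ∈
        {π : Measure (E × E) | π.map Prod.fst = Measure.dirac x ∧ π.map Prod.snd = ν} := by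
      refine ⟨?_, ?_⟩
      · rw [Measure.map_fst_prod]; simp
      · rw [Measure.map_snd_prod]; simp
    refine le_trans (biInf_le _ hmem) ?_
    exact (wpaux_cost_dirac_left x hmem.1 hmem.2).le
  · refine le_iInf₂ fun π hπ => ?_
    obtain ⟨h1, h2⟩ := hπ
    exact (wpaux_cost_dirac_left x h1 h2).ge

lemma wpaux_wdist_dirac_right (hp : 1 ≤ p) (x : E) (μ : Measure E)
    (hμ : IsProbabilityMeasure μ) :
    wassersteinDist p μ (Measure.dirac x) = (∫⁻ y, edist y x ^ p ∂μ) ^ p⁻¹ := by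
  rw [wpaux_wdist_eq hp]
  congr 1
  refine le_antisymm ?_ ?_
  · have hmem : μ.prod (Measure.dirac x) ∈
        {π : Measure (E × E) | π.map Prod.fst = μ ∧ π.map Prod.snd = Measure.dirac x} := by
      refine ⟨?_, ?_⟩
      · rw [Measure.map_fst_prod]; simp
      · rw [Measure.map_snd_prod]; simp
    refine le_trans (biInf_le _ hmem) ?_
    exact (wpaux_cost_dirac_right x hmem.1 hmem.2).le
  · refine le_iInf₂ fun π hπ => ?_
    obtain ⟨h1, h2⟩ := hπ
    exact (wpaux_cost_dirac_right x h1 h2).ge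

end Aux

section Aux2
set_option linter.unusedSectionVars false
variable {E : Type*} [NormedAddCommGroup E] [InnerProductSpace ℝ E]
  [SecondCountableTopology E] [MeasurableSpace E] [BorelSpace E] {p : ℝ}

lemma wpaux_moment_ne_top (hp : 1 ≤ p) {μ : Measure E} (hμ : MemWp p μ) (x : E) :
    ∫⁻ y, edist y x ^ p ∂μ ≠ ⊤ := by
  haveI := hμ.1
  have hp0 : (0:ℝ) ≤ p := le_trans zero_le_one hp
  obtain ⟨x₀, hx₀⟩ := hμ.2
  have hb : ∀ y : E, edist y x ^ p ≤ 2 ^ p * (edist y x₀ ^ p + edist x₀ x ^ p) := by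
    intro y
    calc edist y x ^ p ≤ (edist y x₀ + edist x₀ x) ^ p :=
          ENNReal.rpow_le_rpow (edist_triangle _ _ _) hp0
    _ ≤ (2 * max (edist y x₀) (edist x₀ x)) ^ p := by
          refine ENNReal.rpow_le_rpow ?_ hp0
          rw [two_mul]
          exact add_le_add (le_max_left _ _) (le_max_right _ _)
    _ = 2 ^ p * max (edist y x₀) (edist x₀ x) ^ p := ENNReal.mul_rpow_of_nonneg _ _ hp0
    _ ≤ 2 ^ p * (edist y x₀ ^ p + edist x₀ x ^ p) := by
          gcongr
          rcases max_cases (edist y x₀) (edist x₀ x) with ⟨h, -⟩ | ⟨h, -⟩ <;> rw [h]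
          · exact le_self_add
          · exact le_add_self
  refine ne_top_of_le_ne_top ?_ (lintegral_mono hb)
  rw [lintegral_const_mul _ (f := fun a : E => edist a x₀ ^ p + edist x₀ x ^ p)
      ((wpaux_meas1' x₀).add measurable_const),
    lintegral_add_right _ measurable_const, lintegral_const]
  refine ENNReal.mul_ne_top (ENNReal.rpow_ne_top_of_nonneg hp0 ENNReal.ofNat_ne_top) ?_
  refine ENNReal.add_ne_top.mpr ⟨hx₀, ?_⟩
  simp only [measure_univ, mul_one]
  exact ENNReal.rpow_ne_top_of_nonneg hp0 (edist_ne_top _ _)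

lemma wpaux_memWp_dirac (hp : 1 ≤ p) (x : E) : MemWp p (Measure.dirac x) := by
  refine ⟨inferInstance, x, ?_⟩
  rw [lintegral_dirac' x (wpaux_meas1' x)]
  simp [ENNReal.zero_rpow_of_pos (lt_of_lt_of_le one_pos hp), edist_self]

lemma wpaux_wdist_dirac_dirac (hp : 1 ≤ p) (a c : E) :
    wassersteinDist p (Measure.dirac a) (Measure.dirac c) = edist a c := by
  have hpne : p ≠ 0 := by positivity
  rw [wpaux_wdist_dirac_left hp a _ inferInstance, lintegral_dirac' c (wpaux_meas1 a),
    ENNReal.rpow_rpow_inv hpne]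

lemma wpaux_eq_dirac_of_compl_null {μ : Measure E} (hμ : IsProbabilityMeasure μ) {x : E}
    (h : μ {x}ᶜ = 0) : μ = Measure.dirac x := by
  have hx1 : μ {x} = 1 := by
    have hc := measure_add_measure_compl (μ := μ) (measurableSet_singleton x)
    rw [h, add_zero, measure_univ] at hc
    exact hc
  ext s hs
  rw [Measure.dirac_apply' x hs]
  have hd : μ (s \ {x}) = 0 := measure_mono_null (Set.diff_subset_compl s {x}) h
  have hsplit := measure_inter_add_diff (μ := μ) s (measurableSet_singleton x)
  rw [hd, add_zero] at hsplit
  by_cases hx : x ∈ s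
  · rw [← hsplit, Set.inter_eq_right.mpr (Set.singleton_subset_iff.mpr hx), hx1]
    simp [Set.indicator_of_mem hx]
  · have : s ∩ {x} = ∅ := by
      ext y; simp only [Set.mem_inter_iff, Set.mem_singleton_iff, Set.mem_empty_iff_false,
        iff_false, not_and]
      rintro hy rfl; exact hx hy
    rw [← hsplit, this, measure_empty]
    simp [Set.indicator_of_notMem hx]

lemma wpaux_dirac_inj {x y : E} (h : Measure.dirac x = Measure.dirac y) : x = y := by
  by_contra hne
  have h1 : Measure.dirac x {x} = 1 := by
    rw [Measure.dirac_apply' x (measurableSet_singleton x)]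
    simp
  have h2 : Measure.dirac y {x} = 0 := by
    rw [Measure.dirac_apply' y (measurableSet_singleton x)]
    simp [Set.indicator, Ne.symm hne]
  rw [h, h2] at h1
  exact one_ne_zero h1.symm

end Aux2

section Aux3
set_option linter.unusedSectionVars false
variable {E : Type*} [NormedAddCommGroup E] [InnerProductSpace ℝ E]
  [SecondCountableTopology E] [MeasurableSpace E] [BorelSpace E] {p : ℝ}

lemma wpaux_exists_two_support_points {μ : Measure E} (hprob : IsProbabilityMeasure μ)
    (h : ¬ ∃ x, μ = Measure.dirac x) :
    ∃ x₁ x₂ : E, x₁ ≠ x₂ ∧ (∀ ε : ℝ, 0 < ε → 0 < μ (Metric.ball x₁ ε)) ∧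
      (∀ ε : ℝ, 0 < ε → 0 < μ (Metric.ball x₂ ε)) := by
  obtain ⟨B, hBc, -, hB⟩ := TopologicalSpace.exists_countable_basis E
  set K := {x : E | ∀ ε : ℝ, 0 < ε → 0 < μ (Metric.ball x ε)} with hK
  have hKc0 : μ Kᶜ = 0 := by
    have hsub : Kᶜ ⊆ ⋃₀ {U ∈ B | μ U = 0} := by
      intro x hx
      simp only [hK, Set.mem_compl_iff, Set.mem_setOf_eq, not_forall] at hx
      obtain ⟨ε, hε, h0⟩ := hx
      have hμb : μ (Metric.ball x ε) = 0 := by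
        simpa using h0
      obtain ⟨U, hUB, hxU, hUsub⟩ :=
        hB.exists_subset_of_mem_open (Metric.mem_ball_self hε) Metric.isOpen_ball
      exact ⟨U, ⟨hUB, measure_mono_null hUsub hμb⟩, hxU⟩
    refine measure_mono_null hsub ?_
    rw [measure_sUnion_null_iff (hBc.mono (Set.sep_subset _ _))]
    exact fun s hs => hs.2
  have hKne : K.Nonempty := by
    by_contra hne
    rw [Set.not_nonempty_iff_eq_empty] at hne
    have : μ Kᶜ = 1 := by rw [hne, Set.compl_empty, measure_univ]
    rw [hKc0] at this
    exact one_ne_zero this.symm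
  obtain ⟨x₀, hx₀⟩ := hKne
  by_cases h2 : ∃ x₁ ∈ K, x₁ ≠ x₀
  · obtain ⟨x₁, hx₁, hne⟩ := h2
    exact ⟨x₁, x₀, hne, hx₁, hx₀⟩
  · exfalso
    push_neg at h2
    have hsub : {x₀}ᶜ ⊆ Kᶜ := by
      intro y hy hyK
      exact hy (h2 y hyK)
    exact h (⟨x₀, wpaux_eq_dirac_of_compl_null hprob (measure_mono_null hsub hKc0)⟩)

end Aux3

section StepA
set_option linter.unusedSectionVars false
variable {E : Type*} [NormedAddCommGroup E] [InnerProductSpace ℝ E]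
  [SecondCountableTopology E] [MeasurableSpace E] [BorelSpace E] {p : ℝ}

lemma wpaux_edist_eq (a b : E) : edist a b = (‖a - b‖₊ : ℝ≥0∞) := by
  rw [edist_nndist, nndist_eq_nnnorm]

lemma wpaux_dirac_P (hp : 1 ≤ p) (x : E) {ν : Measure E} (hν : MemWp p ν) :
    ∃ σ : Measure E, MemWp p σ ∧
      wassersteinDist p (Measure.dirac x) σ = 2 * wassersteinDist p (Measure.dirac x) ν ∧
      wassersteinDist p ν σ = wassersteinDist p (Measure.dirac x) ν := by
  haveI := hν.1
  have hp0 : (0:ℝ) < p := lt_of_lt_of_le one_pos hp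
  have hpne : p ≠ 0 := ne_of_gt hp0
  set f : E → E := fun y => (2:ℝ) • y - x with hf
  have hfm : Measurable f :=
    ((continuous_const_smul (2:ℝ)).sub continuous_const).measurable
  set σ : Measure E := ν.map f with hσdef
  haveI hσprob : IsProbabilityMeasure σ := Measure.isProbabilityMeasure_map hfm.aemeasurable
  set I : ℝ≥0∞ := ∫⁻ y, edist x y ^ p ∂ν with hI
  have hIne : I ≠ ⊤ := by
    have := wpaux_moment_ne_top hp hν x
    rw [hI]
    refine ne_top_of_le_ne_top this (le_of_eq (lintegral_congr fun y => ?_))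
    rw [edist_comm]
  -- key identities
  have hkey1 : ∀ y : E, edist x (f y) = 2 * edist x y := by
    intro y
    have hv : x - f y = (2:ℝ) • (x - y) := by
      simp only [hf]
      module
    rw [wpaux_edist_eq, wpaux_edist_eq, hv, nnnorm_smul]
    push_cast
    norm_num
  have hkey2 : ∀ y : E, edist y (f y) = edist x y := by
    intro y
    have hv : y - f y = x - y := by
      simp only [hf]
      module
    rw [wpaux_edist_eq, wpaux_edist_eq, hv]
  have hIσ : ∫⁻ z, edist x z ^ p ∂σ = 2 ^ p * I := by
    rw [hσdef, lintegral_map (wpaux_meas1 x) hfm]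
    have : ∀ y : E, edist x (f y) ^ p = 2 ^ p * edist x y ^ p := by
      intro y
      rw [hkey1 y, ENNReal.mul_rpow_of_nonneg _ _ hp0.le]
    rw [lintegral_congr this, lintegral_const_mul _ (wpaux_meas1 x)]
  have hWxν : wassersteinDist p (Measure.dirac x) ν = I ^ p⁻¹ :=
    wpaux_wdist_dirac_left hp x ν inferInstance
  have hWxσ : wassersteinDist p (Measure.dirac x) σ = 2 * I ^ p⁻¹ := by
    rw [wpaux_wdist_dirac_left hp x σ inferInstance, hIσ,
      ENNReal.mul_rpow_of_nonneg _ _ (by positivity : (0:ℝ) ≤ p⁻¹),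
      ENNReal.rpow_rpow_inv hpne]
  -- upper bound for W ν σ
  have hg : Measurable (fun y : E => (y, f y)) := measurable_id.prodMk hfm
  have hπ1 : (ν.map fun y => (y, f y)).map Prod.fst = ν := by
    rw [Measure.map_map measurable_fst hg]
    exact Measure.map_id
  have hπ2 : (ν.map fun y => (y, f y)).map Prod.snd = σ := by
    rw [Measure.map_map measurable_snd hg, hσdef]
    rfl
  have hub : wassersteinDist p ν σ ≤ I ^ p⁻¹ := by
    refine le_trans (wpaux_wdist_le_coupling hp hπ1 hπ2) ?_
    refine ENNReal.rpow_le_rpow (le_of_eq ?_) (by positivity)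
    rw [lintegral_map wpaux_meascost hg]
    exact lintegral_congr fun y => by rw [hkey2 y]
  -- lower bound for W ν σ
  have hlb : I ^ p⁻¹ ≤ wassersteinDist p ν σ := by
    rw [wpaux_wdist_eq hp]
    refine ENNReal.rpow_le_rpow ?_ (by positivity)
    refine le_iInf₂ fun π hπ => ?_
    obtain ⟨h1, h2⟩ := hπ
    set J : ℝ≥0∞ := ∫⁻ z, edist z.1 z.2 ^ p ∂π with hJ
    -- ∫ edist x z.2 ^ p = 2^p * I
    have hsnd : ∫⁻ z, edist x z.2 ^ p ∂π = 2 ^ p * I := by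
      rw [wpaux_lint_snd h2 (wpaux_meas1 x), hIσ]
    have hfst : ∫⁻ z, edist x z.1 ^ p ∂π = I := wpaux_lint_fst h1 (wpaux_meas1 x)
    -- Minkowski
    have htri : ∀ z : E × E, edist x z.2 ≤ edist x z.1 + edist z.1 z.2 :=
      fun z => edist_triangle _ _ _
    have hmink := ENNReal.lintegral_Lp_add_le
      (μ := π) (f := fun z : E × E => edist x z.1) (g := fun z : E × E => edist z.1 z.2)
      ((measurable_const.edist measurable_fst).aemeasurable)
      ((measurable_fst.edist measurable_snd).aemeasurable) hp
    have hchain : (2:ℝ≥0∞) * I ^ p⁻¹ ≤ I ^ p⁻¹ + J ^ p⁻¹ := by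
      have e1 : (2:ℝ≥0∞) * I ^ p⁻¹ = (2 ^ p * I) ^ p⁻¹ := by
        rw [ENNReal.mul_rpow_of_nonneg _ _ (by positivity : (0:ℝ) ≤ p⁻¹),
          ENNReal.rpow_rpow_inv hpne]
      rw [e1, ← hsnd]
      calc (∫⁻ z, edist x z.2 ^ p ∂π) ^ p⁻¹
          ≤ (∫⁻ z, ((fun z : E × E => edist x z.1) + fun z : E × E => edist z.1 z.2) z ^ p ∂π) ^ p⁻¹ := by
            refine ENNReal.rpow_le_rpow (lintegral_mono fun z => ?_) (by positivity)
            exact ENNReal.rpow_le_rpow (htri z) hp0.le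
        _ ≤ (∫⁻ z, edist x z.1 ^ p ∂π) ^ (1/p) + (∫⁻ z, edist z.1 z.2 ^ p ∂π) ^ (1/p) := by
            rw [← one_div]
            exact hmink
        _ = I ^ p⁻¹ + J ^ p⁻¹ := by rw [one_div, hfst, hJ]
    have hcancel : I ^ p⁻¹ ≤ J ^ p⁻¹ := by
      have hIne' : I ^ p⁻¹ ≠ ⊤ := ENNReal.rpow_ne_top_of_nonneg (by positivity) hIne
      have : I ^ p⁻¹ + I ^ p⁻¹ ≤ I ^ p⁻¹ + J ^ p⁻¹ := by
        rw [← two_mul]; exact hchain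
      exact (ENNReal.add_le_add_iff_left hIne').mp this
    calc I = (I ^ p⁻¹) ^ p := (ENNReal.rpow_inv_rpow hpne I).symm
      _ ≤ (J ^ p⁻¹) ^ p := ENNReal.rpow_le_rpow hcancel hp0.le
      _ = J := ENNReal.rpow_inv_rpow hpne J
  -- MemWp σ
  have hσW : MemWp p σ := by
    refine ⟨hσprob, x, ?_⟩
    have : ∫⁻ z, edist z x ^ p ∂σ = 2 ^ p * I := by
      rw [← hIσ]
      exact lintegral_congr fun z => by rw [edist_comm]
    rw [this]
    exact ENNReal.mul_ne_top (ENNReal.rpow_ne_top_of_nonneg hp0.le ENNReal.ofNat_ne_top) hIne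
  exact ⟨σ, hσW, by rw [hWxσ, hWxν], by rw [le_antisymm hub hlb, hWxν]⟩

end StepA

section StepB
set_option linter.unusedSectionVars false
variable {E : Type*} [NormedAddCommGroup E] [InnerProductSpace ℝ E]
  [SecondCountableTopology E] [MeasurableSpace E] [BorelSpace E] {p : ℝ}

lemma wpaux_geom1 {t c eps nw na : ℝ} (ht : 0 ≤ t) (heps : 0 < eps)
    (hna : 0 ≤ na) (hn : na < eps)
    (hexp : na^2 = t^2*nw^2 - 2*(t*c) + (2*eps)^2) : 0 < t * c := by
  have hna2 : na^2 < eps^2 := by nlinarith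
  nlinarith [sq_nonneg (t*nw)]

lemma wpaux_geom2 {t c eps nw na : ℝ} (ht : 0 ≤ t) (heps : 0 < eps)
    (hna : 0 ≤ na) (hn : na < eps)
    (hexp : na^2 = t^2*nw^2 + 2*(t*c) + (2*eps)^2) : t * c < 0 := by
  have hna2 : na^2 < eps^2 := by nlinarith
  nlinarith [sq_nonneg (t*nw)]

lemma wpaux_geom_contra {t₁ t₂ c : ℝ} (ht1 : 0 ≤ t₁) (ht2 : 0 ≤ t₂)
    (h1 : 0 < t₁ * c) (h2 : t₂ * c < 0) : False := by
  have hc : 0 < c := by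
    rcases le_or_gt c 0 with h | h
    · exact absurd (mul_nonpos_of_nonneg_of_nonpos ht1 h) (not_le.mpr h1)
    · exact h
  exact absurd (mul_nonneg ht2 hc.le) (not_le.mpr h2)

set_option maxHeartbeats 1000000 in
lemma wpaux_dirac_of_P (hp : 1 ≤ p) {μ : Measure E} (hμ : MemWp p μ)
    (hP : ∀ ν : Measure E, MemWp p ν → ∃ σ : Measure E, MemWp p σ ∧
      wassersteinDist p μ σ = 2 * wassersteinDist p μ ν ∧
      wassersteinDist p ν σ = wassersteinDist p μ ν) :
    ∃ x, μ = Measure.dirac x := by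
  by_contra hND
  have hμprob := hμ.1
  haveI := hμprob
  have hp0 : (0:ℝ) < p := lt_of_lt_of_le one_pos hp
  have hpne : p ≠ 0 := ne_of_gt hp0
  obtain ⟨x₁, x₂, hne12, hball1, hball2⟩ := wpaux_exists_two_support_points hμprob hND
  set b : E := ((1:ℝ)/2) • (x₁ + x₂) with hbdef
  obtain ⟨σ, hσW, h2, h1⟩ := hP (Measure.dirac b) (wpaux_memWp_dirac hp b)
  have hσprob := hσW.1
  haveI := hσprob
  set r : ℝ≥0∞ := wassersteinDist p μ (Measure.dirac b) with hrdef
  have hr_eq : r = (∫⁻ z, edist z b ^ p ∂μ) ^ p⁻¹ := wpaux_wdist_dirac_right hp b μ hμprob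
  have hrtop : r ≠ ⊤ := by
    rw [hr_eq]
    exact ENNReal.rpow_ne_top_of_nonneg (by positivity) (wpaux_moment_ne_top hp hμ b)
  have hr0 : r ≠ 0 := by
    intro h0
    rw [hr_eq] at h0
    have hI0 : ∫⁻ z, edist z b ^ p ∂μ = 0 := by
      rcases ENNReal.rpow_eq_zero_iff.mp h0 with ⟨h, -⟩ | ⟨-, hlt⟩
      · exact h
      · exact absurd hlt (not_lt.mpr (by positivity))
    have haeμ := (lintegral_eq_zero_iff (wpaux_meas1' b)).mp hI0
    have hcompl : μ {b}ᶜ = 0 := by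
      have hev : ∀ᵐ z ∂μ, z = b := by
        filter_upwards [haeμ] with z hz
        simp only [Pi.zero_apply] at hz
        rcases ENNReal.rpow_eq_zero_iff.mp hz with ⟨h, -⟩ | ⟨-, hlt⟩
        · exact edist_eq_zero.mp h
        · exact absurd hlt (not_lt.mpr hp0.le)
      have h' := ae_iff.mp hev
      have hset : {a : E | ¬ a = b} = {b}ᶜ := by ext z; simp
      rw [← hset]
      exact h'
    exact hND ⟨b, wpaux_eq_dirac_of_compl_null hμprob hcompl⟩
  -- the second moment identity for σ
  have hs_eq : (∫⁻ y, edist b y ^ p ∂σ) = r ^ p := by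
    have := wpaux_wdist_dirac_left hp b σ hσprob
    rw [h1] at this
    rw [← ENNReal.rpow_inv_rpow hpne (∫⁻ y, edist b y ^ p ∂σ), ← this]
  have hm_eq : (∫⁻ z, edist z b ^ p ∂μ) = r ^ p := by
    rw [hr_eq, ENNReal.rpow_inv_rpow hpne]
  -- the product coupling
  set π : Measure (E × E) := μ.prod σ with hπdef
  have hm1 : π.map Prod.fst = μ := by rw [hπdef, Measure.map_fst_prod]; simp
  have hm2 : π.map Prod.snd = σ := by rw [hπdef, Measure.map_snd_prod]; simp
  set A : ℝ≥0∞ := ∫⁻ z, edist z.1 z.2 ^ p ∂π with hAdef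
  set Bq : ℝ≥0∞ := ∫⁻ z, (edist z.1 b + edist b z.2) ^ p ∂π with hBqdef
  have hGmeas : Measurable fun z : E × E => edist z.1 b := measurable_fst.edist measurable_const
  have hHmeas : Measurable fun z : E × E => edist b z.2 := measurable_const.edist measurable_snd
  have hBqmeas : Measurable fun z : E × E => (edist z.1 b + edist b z.2) ^ p :=
    ENNReal.continuous_rpow_const.measurable.comp (hGmeas.add hHmeas)
  have hGp : ∫⁻ z, edist z.1 b ^ p ∂π = r ^ p := by
    rw [wpaux_lint_fst hm1 (wpaux_meas1' b)]; exact hm_eq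
  have hHp : ∫⁻ z, edist b z.2 ^ p ∂π = r ^ p := by
    rw [wpaux_lint_snd hm2 (wpaux_meas1 b)]; exact hs_eq
  have hAB : A ≤ Bq := by
    refine lintegral_mono fun z => ?_
    exact ENNReal.rpow_le_rpow (edist_triangle _ _ _) hp0.le
  have hub : wassersteinDist p μ σ ≤ A ^ p⁻¹ := wpaux_wdist_le_coupling hp hm1 hm2
  have hmink : Bq ^ p⁻¹ ≤ 2 * r := by
    have h := ENNReal.lintegral_Lp_add_le (μ := π)
      (f := fun z : E × E => edist z.1 b) (g := fun z : E × E => edist b z.2)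
      hGmeas.aemeasurable hHmeas.aemeasurable hp
    rw [one_div] at h
    have heq : ∫⁻ z, ((fun z : E × E => edist z.1 b) + fun z : E × E => edist b z.2) z ^ p ∂π
        = Bq := by
      exact lintegral_congr fun z => rfl
    rw [heq, hGp, hHp] at h
    calc Bq ^ p⁻¹ ≤ (r ^ p) ^ p⁻¹ + (r ^ p) ^ p⁻¹ := h
      _ = 2 * r := by rw [ENNReal.rpow_rpow_inv hpne, two_mul]
  have h2r : wassersteinDist p μ σ = 2 * r := h2
  have hchain1 : 2 * r ≤ A ^ p⁻¹ := h2r ▸ hub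
  have hchain2 : A ^ p⁻¹ ≤ Bq ^ p⁻¹ := ENNReal.rpow_le_rpow hAB (by positivity)
  have hAeq : A ^ p⁻¹ = Bq ^ p⁻¹ :=
    le_antisymm hchain2 (le_trans hmink hchain1)
  have hABeq : A = Bq := ENNReal.rpow_left_injective (inv_ne_zero hpne) hAeq
  have hBqtop : Bq ≠ ⊤ := by
    have hBqval : Bq ^ p⁻¹ ≤ 2 * r := hmink
    intro htop
    rw [htop, ENNReal.top_rpow_of_pos (by positivity)] at hBqval
    exact ENNReal.mul_ne_top ENNReal.ofNat_ne_top hrtop (top_le_iff.mp hBqval)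
  -- a.e. equality of the integrands
  have haeeq : ∀ᵐ z ∂π, edist z.1 z.2 = edist z.1 b + edist b z.2 := by
    have hAtop : A ≠ ⊤ := hABeq ▸ hBqtop
    have hsub : ∫⁻ z, ((edist z.1 b + edist b z.2) ^ p - edist z.1 z.2 ^ p) ∂π = 0 := by
      rw [lintegral_sub wpaux_meascost hAtop
        (ae_of_all _ fun z => ENNReal.rpow_le_rpow (edist_triangle _ _ _) hp0.le)]
      rw [← hBqdef, ← hAdef, hABeq, tsub_self]
    have := (lintegral_eq_zero_iff (hBqmeas.sub wpaux_meascost)).mp hsub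
    filter_upwards [this] with z hz
    simp only [Pi.zero_apply] at hz
    have hle : edist z.1 z.2 ^ p ≤ (edist z.1 b + edist b z.2) ^ p :=
      ENNReal.rpow_le_rpow (edist_triangle _ _ _) hp0.le
    have hge : (edist z.1 b + edist b z.2) ^ p ≤ edist z.1 z.2 ^ p := tsub_eq_zero_iff_le.mp hz
    have hpow : edist z.1 z.2 ^ p = (edist z.1 b + edist b z.2) ^ p := le_antisymm hle hge
    exact ENNReal.rpow_left_injective hpne hpow
  -- convert to the same-ray statement
  have haeray : ∀ᵐ z ∂π, ‖b - z.2‖ • (z.1 - b) = ‖z.1 - b‖ • (b - z.2) := by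
    filter_upwards [haeeq] with z hz
    set u : E := z.1 - b with hu
    set v : E := b - z.2 with hv
    have huv : z.1 - z.2 = u + v := by rw [hu, hv]; module
    have hnn : (‖u + v‖₊ : ℝ≥0∞) = (‖u‖₊ : ℝ≥0∞) + (‖v‖₊ : ℝ≥0∞) := by
      rw [← huv]
      have e1 := wpaux_edist_eq z.1 z.2
      have e2 := wpaux_edist_eq z.1 b
      have e3 := wpaux_edist_eq b z.2
      rw [e1, e2, e3] at hz
      exact_mod_cast hz
    have hnorm : ‖u + v‖ = ‖u‖ + ‖v‖ := by
      have h1 : ENNReal.ofReal ‖u + v‖ = ENNReal.ofReal (‖u‖ + ‖v‖) := by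
        rw [ENNReal.ofReal_add (norm_nonneg u) (norm_nonneg v),
          ofReal_norm, ofReal_norm, ofReal_norm]
        exact hnn
      exact (ENNReal.ofReal_eq_ofReal_iff (norm_nonneg _) (by positivity)).mp h1
    have hinner : ⟪u, v⟫ = ‖u‖ * ‖v‖ := by
      nlinarith [norm_add_sq_real u v, norm_nonneg u, norm_nonneg v, hnorm]
    exact inner_eq_norm_mul_iff_real.mp hinner
  -- Fubini via swap
  set A' : Set (E × E) := {z : E × E | ‖b - z.2‖ • (z.1 - b) = ‖z.1 - b‖ • (b - z.2)}
    with hA'def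
  have hA'meas : MeasurableSet A' := by
    refine (isClosed_eq ?_ ?_).measurableSet
    · exact ((continuous_const.sub continuous_snd).norm).smul
        (continuous_fst.sub continuous_const)
    · exact ((continuous_fst.sub continuous_const).norm).smul
        (continuous_const.sub continuous_snd)
  have hπA'c : π A'ᶜ = 0 := by
    have := ae_iff.mp haeray
    convert this using 2
    rfl
  have hswapmeas : MeasurableSet (Prod.swap ⁻¹' A'ᶜ : Set (E × E)) :=
    hA'meas.compl.preimage measurable_swap
  have hswap : (σ.prod μ) (Prod.swap ⁻¹' A'ᶜ) = 0 := by
    rw [← Measure.prod_swap, Measure.map_apply measurable_swap hswapmeas]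
    have heq : (Prod.swap ⁻¹' (Prod.swap ⁻¹' A'ᶜ) : Set (E × E)) = A'ᶜ := by
      ext z; simp
    rw [heq]
    exact hπA'c
  have hslice := (Measure.measure_prod_null hswapmeas).mp hswap
  -- σ is not the Dirac at b
  have hσne : σ ≠ Measure.dirac b := by
    intro hcontra
    rw [hcontra, wpaux_wdist_dirac_dirac hp b b, edist_self] at h1
    exact hr0 (hrdef ▸ h1.symm)
  have hσbc : σ {b}ᶜ ≠ 0 := by
    intro h0
    exact hσne (wpaux_eq_dirac_of_compl_null hσprob h0)
  -- pick y₀ ≠ b in the full-measure slice set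
  have hsliceae : ∀ᵐ y ∂σ, μ (Prod.mk y ⁻¹' (Prod.swap ⁻¹' A'ᶜ)) = 0 := hslice
  set N : Set E := {y : E | ¬ μ (Prod.mk y ⁻¹' (Prod.swap ⁻¹' A'ᶜ)) = 0} with hNdef
  have hN0 : σ N = 0 := ae_iff.mp hsliceae
  have hy₀ : ∃ y₀ : E, y₀ ≠ b ∧ μ (Prod.mk y₀ ⁻¹' (Prod.swap ⁻¹' A'ᶜ)) = 0 := by
    by_contra hnone
    push_neg at hnone
    have hsub : {b}ᶜ ⊆ N := by
      intro y hy
      exact hnone y hy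
    exact hσbc (measure_mono_null hsub hN0)
  obtain ⟨y₀, hy₀ne, hy₀0⟩ := hy₀
  -- the set S of x lying on the ray from b opposite to y₀
  set S : Set E := {x : E | (x, y₀) ∈ A'} with hSdef
  have hScompl0 : μ Sᶜ = 0 := by
    have : Sᶜ = Prod.mk y₀ ⁻¹' (Prod.swap ⁻¹' A'ᶜ) := by
      ext x
      simp [hSdef, Set.mem_preimage, Prod.swap]
    rw [this]
    exact hy₀0
  -- points of S near x₁ and x₂
  set ε : ℝ := dist x₁ x₂ / 4 with hεdef
  have hεpos : 0 < ε := by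
    rw [hεdef]
    have := dist_pos.mpr hne12
    linarith
  have hpick : ∀ x : E, (0 < μ (Metric.ball x ε)) → (Metric.ball x ε ∩ S).Nonempty := by
    intro x hx
    rw [Set.nonempty_iff_ne_empty]
    intro hempty
    have hsub : Metric.ball x ε ⊆ Sᶜ := by
      intro z hz
      intro hzS
      exact Set.eq_empty_iff_forall_notMem.mp hempty z ⟨hz, hzS⟩
    exact (ne_of_gt hx) (measure_mono_null hsub hScompl0)
  obtain ⟨a₁, ha₁ball, ha₁S⟩ := hpick x₁ (hball1 ε hεpos)
  obtain ⟨a₂, ha₂ball, ha₂S⟩ := hpick x₂ (hball2 ε hεpos)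
  -- geometry: contradiction
  set w : E := b - y₀ with hwdef
  have hwne : w ≠ 0 := sub_ne_zero.mpr (Ne.symm hy₀ne)
  have hwnorm : (0:ℝ) < ‖w‖ := norm_pos_iff.mpr hwne
  have hray : ∀ a : E, a ∈ S → ∃ t : ℝ, 0 ≤ t ∧ a - b = t • w := by
    intro a haS
    have ha : ‖b - y₀‖ • (a - b) = ‖a - b‖ • (b - y₀) := haS
    refine ⟨‖w‖⁻¹ * ‖a - b‖, by positivity, ?_⟩
    have h2' : ‖w‖⁻¹ • (‖b - y₀‖ • (a - b)) = ‖w‖⁻¹ • (‖a - b‖ • (b - y₀)) := by rw [ha]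
    rw [← hwdef, smul_smul, smul_smul, inv_mul_cancel₀ (ne_of_gt hwnorm), one_smul] at h2'
    exact h2'
  obtain ⟨t₁, ht₁0, hat₁⟩ := hray a₁ ha₁S
  obtain ⟨t₂, ht₂0, hat₂⟩ := hray a₂ ha₂S
  set c : ℝ := ⟪w, x₁ - b⟫ with hcdef
  have hx1b : x₁ - b = ((1:ℝ)/2) • (x₁ - x₂) := by rw [hbdef]; module
  have hnormx1b : ‖x₁ - b‖ = 2 * ε := by
    rw [hx1b, norm_smul, hεdef]
    simp [Real.norm_eq_abs, abs_of_pos, dist_eq_norm]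
    ring
  have hd1 : a₁ - x₁ = t₁ • w - (x₁ - b) := by
    rw [← hat₁]; module
  have hd2 : a₂ - x₂ = t₂ • w + (x₁ - b) := by
    have hx2b : x₂ - b = -(((1:ℝ)/2) • (x₁ - x₂)) := by rw [hbdef]; module
    rw [← hat₂, hx1b]
    rw [hbdef]; module
  have hn1 : ‖a₁ - x₁‖ < ε := by
    rw [← dist_eq_norm]; exact Metric.mem_ball.mp ha₁ball
  have hn2 : ‖a₂ - x₂‖ < ε := by
    rw [← dist_eq_norm]; exact Metric.mem_ball.mp ha₂ball
  have hexp1 : ‖a₁ - x₁‖^2 = t₁^2 * ‖w‖^2 - 2 * (t₁ * c) + (2*ε)^2 := by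
    rw [hd1, norm_sub_sq_real, norm_smul, real_inner_smul_left, ← hcdef, hnormx1b,
      Real.norm_eq_abs, abs_of_nonneg ht₁0]
    ring
  have hexp2 : ‖a₂ - x₂‖^2 = t₂^2 * ‖w‖^2 + 2 * (t₂ * c) + (2*ε)^2 := by
    rw [hd2, norm_add_sq_real, norm_smul, real_inner_smul_left, ← hcdef, hnormx1b,
      Real.norm_eq_abs, abs_of_nonneg ht₂0]
    ring
  have hq1 : 0 < t₁ * c :=
    wpaux_geom1 ht₁0 hεpos (norm_nonneg _) hn1 hexp1
  have hq2 : t₂ * c < 0 :=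
    wpaux_geom2 ht₂0 hεpos (norm_nonneg _) hn2 hexp2
  exact wpaux_geom_contra ht₁0 ht₂0 hq1 hq2

end StepB

/-- for `1 ≤ p < ∞` and any isometry `Φ` of the `p`-Wasserstein space over a
separable real Hilbert space `E`, there is a surjective isometry `ψ` of `E` with
`Φ(δ_x) = δ_{ψ(x)}` for all `x`. -/
theorem isometry_sends_diracs_to_diracs
    {E : Type*} [NormedAddCommGroup E] [InnerProductSpace ℝ E] [CompleteSpace E]
    [SecondCountableTopology E] [MeasurableSpace E] [BorelSpace E]
    (p : ℝ) (hp : 1 ≤ p)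
    (Φ : Measure E → Measure E)
    (hmaps : ∀ μ : Measure E, MemWp p μ → MemWp p (Φ μ))
    (hinj : ∀ μ ν : Measure E, MemWp p μ → MemWp p ν → Φ μ = Φ ν → μ = ν)
    (hsurj : ∀ ν : Measure E, MemWp p ν → ∃ μ, MemWp p μ ∧ Φ μ = ν)
    (hiso : ∀ μ ν : Measure E, MemWp p μ → MemWp p ν →
      wassersteinDist p (Φ μ) (Φ ν) = wassersteinDist p μ ν) :
    ∃ ψ : E → E, Isometry ψ ∧ Function.Surjective ψ ∧
      ∀ x : E, Φ (Measure.dirac x) = Measure.dirac (ψ x) := by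
  have hPd : ∀ x : E, ∃ y, Φ (Measure.dirac x) = Measure.dirac y := by
    intro x
    have hdx : MemWp p (Measure.dirac x) := wpaux_memWp_dirac hp x
    refine wpaux_dirac_of_P hp (hmaps _ hdx) ?_
    intro ν' hν'
    obtain ⟨ν, hν, rfl⟩ := hsurj ν' hν'
    obtain ⟨σ, hσ, hA, hB⟩ := wpaux_dirac_P hp x hν
    exact ⟨Φ σ, hmaps _ hσ,
      by rw [hiso _ _ hdx hσ, hiso _ _ hdx hν, hA],
      by rw [hiso _ _ hν hσ, hiso _ _ hdx hν, hB]⟩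
  choose ψ hψ using hPd
  refine ⟨ψ, ?_, ?_, hψ⟩
  · intro x y
    have h := hiso _ _ (wpaux_memWp_dirac hp x) (wpaux_memWp_dirac hp y)
    rw [hψ x, hψ y, wpaux_wdist_dirac_dirac hp, wpaux_wdist_dirac_dirac hp] at h
    exact h
  · intro y
    obtain ⟨μ, hμ, hΦμ⟩ := hsurj (Measure.dirac y) (wpaux_memWp_dirac hp y)
    have hPμ : ∀ ν : Measure E, MemWp p ν → ∃ σ : Measure E, MemWp p σ ∧
        wassersteinDist p μ σ = 2 * wassersteinDist p μ ν ∧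
        wassersteinDist p ν σ = wassersteinDist p μ ν := by
      intro ν hν
      obtain ⟨σ', hσ', hA, hB⟩ := wpaux_dirac_P hp y (hmaps _ hν)
      obtain ⟨σ, hσ, rfl⟩ := hsurj σ' hσ'
      refine ⟨σ, hσ, ?_, ?_⟩
      · rw [← hiso _ _ hμ hσ, hΦμ, hA, ← hΦμ, hiso _ _ hμ hν]
      · rw [← hiso _ _ hν hσ, hB, ← hΦμ, hiso _ _ hμ hν]
    obtain ⟨x, rfl⟩ := wpaux_dirac_of_P hp hμ hPμ
    refine ⟨x, ?_⟩
    have h := hψ x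
    rw [hΦμ] at h
    exact (wpaux_dirac_inj h).symm
end
end

section
/- Let 1 < p < ∞ and let E be a separable real Hilbert space with dim E ≥ 2. For a measure μ ∈ W_p(E) the following are equivalent: (i) μ is a Dirac measure; (ii) for every T > 0, every geodesic segment γ : [0,T] → W_p(E) with γ(0) = μ can be extended to a geodesic ray on [0,∞), i.e. there exists γ̃ : [0,∞) → W_p(E) with d_{W_p}(γ̃(s),γ̃(t)) = |s−t| for all s,t ≥ 0 and γ̃(t) = γ(t) for all t ∈ [0,T]. -/
open MeasureTheory ENNReal Topology Filter
open scoped RealInnerProductSpace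

noncomputable section

namespace WpProof

set_option linter.unusedSectionVars false

variable {E : Type*} [NormedAddCommGroup E] [InnerProductSpace ℝ E] [CompleteSpace E]
    [SecondCountableTopology E] [MeasurableSpace E] [BorelSpace E]

/-- The set of couplings. -/
def Cpl (α β : Measure E) : Set (Measure (E × E)) :=
  {π | π.map Prod.fst = α ∧ π.map Prod.snd = β}

variable {p : ℝ}

lemma costMeasurable : Measurable fun z : E × E => edist z.1 z.2 ^ p :=
  (measurable_fst.edist measurable_snd).pow_const p

lemma wd_def (α β : Measure E) :
    wassersteinDist p α β = (⨅ π ∈ Cpl α β, ∫⁻ z, edist z.1 z.2 ^ p ∂π) ^ min p⁻¹ 1 := rfl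

lemma hmin (hp1 : 1 < p) : min p⁻¹ 1 = p⁻¹ := by
  have hp0 : 0 < p := one_pos.trans hp1
  refine min_eq_left ?_
  rw [inv_le_one_iff₀]
  exact Or.inr hp1.le

private lemma iInf_rpow' {ι : Sort*} (C : ι → ℝ≥0∞) {q : ℝ} (hq : 0 < q) :
    (⨅ i, C i) ^ q = ⨅ i, C i ^ q := by
  refine le_antisymm (le_iInf fun i => ENNReal.rpow_le_rpow (iInf_le _ _) hq.le) ?_
  have h1 : (⨅ i, C i ^ q) ^ q⁻¹ ≤ ⨅ i, C i := by
    refine le_iInf fun i => ?_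
    have := ENNReal.rpow_le_rpow (iInf_le (fun i => C i ^ q) i) (inv_pos.mpr hq).le
    rwa [ENNReal.rpow_rpow_inv hq.ne'] at this
  calc (⨅ i, C i ^ q) = ((⨅ i, C i ^ q) ^ q⁻¹) ^ q := (ENNReal.rpow_inv_rpow hq.ne' _).symm
    _ ≤ (⨅ i, C i) ^ q := ENNReal.rpow_le_rpow h1 hq.le

lemma wd_eq_iInf (hp1 : 1 < p) (α β : Measure E) :
    wassersteinDist p α β
      = ⨅ π : Cpl α β, (∫⁻ z, edist z.1 z.2 ^ p ∂(π : Measure (E × E))) ^ p⁻¹ := by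
  have hp0 : 0 < p := one_pos.trans hp1
  rw [wd_def, hmin hp1, ← iInf_subtype'' (Cpl α β) (fun π => ∫⁻ z, edist z.1 z.2 ^ p ∂π)]
  exact iInf_rpow' _ (inv_pos.mpr hp0)

lemma wd_le_coupling (hp1 : 1 < p) {α β : Measure E} {π : Measure (E × E)}
    (hπ : π ∈ Cpl α β) :
    wassersteinDist p α β ≤ (∫⁻ z, edist z.1 z.2 ^ p ∂π) ^ p⁻¹ := by
  have hp0 : 0 < p := one_pos.trans hp1
  rw [wd_def, hmin hp1]
  exact ENNReal.rpow_le_rpow (iInf₂_le π hπ) (inv_pos.mpr hp0).le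

lemma cost_dirac_left {x : E} {ν : Measure E} {π : Measure (E × E)}
    (hπ : π ∈ Cpl (Measure.dirac x) ν) :
    ∫⁻ z, edist z.1 z.2 ^ p ∂π = ∫⁻ w, edist x w ^ p ∂ν := by
  have hx : ∀ᵐ z : E × E ∂π, z.1 = x := by
    have h0 : π.map Prod.fst {x}ᶜ = 0 := by
      rw [hπ.1, Measure.dirac_apply' _ (measurableSet_singleton x).compl]
      simp
    rw [Measure.map_apply measurable_fst (measurableSet_singleton x).compl] at h0
    rw [ae_iff]
    exact h0
  calc ∫⁻ z, edist z.1 z.2 ^ p ∂π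
      = ∫⁻ z : E × E, edist x z.2 ^ p ∂π :=
        lintegral_congr_ae (hx.mono fun z hz => by dsimp only; rw [hz])
    _ = ∫⁻ w, edist x w ^ p ∂ν := by
        rw [← hπ.2, lintegral_map
          (show Measurable fun w : E => edist x w ^ p from
            (measurable_const.edist measurable_id).pow_const p) measurable_snd]

lemma dirac_prod_mem_cpl (x : E) (ν : Measure E) [IsProbabilityMeasure ν] :
    (Measure.dirac x).prod ν ∈ Cpl (Measure.dirac x) ν := by
  constructor
  · rw [Measure.map_fst_prod]; simp
  · rw [Measure.map_snd_prod]; simp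

lemma wd_dirac_left (hp1 : 1 < p) (x : E) (ν : Measure E) [IsProbabilityMeasure ν] :
    wassersteinDist p (Measure.dirac x) ν = (∫⁻ w, edist x w ^ p ∂ν) ^ p⁻¹ := by
  rw [wd_def, hmin hp1]
  congr 1
  refine le_antisymm (iInf₂_le_of_le _ (dirac_prod_mem_cpl x ν)
    (le_of_eq (cost_dirac_left (dirac_prod_mem_cpl x ν)))) ?_
  exact le_iInf₂ fun π hπ => le_of_eq (cost_dirac_left hπ).symm

lemma wd_symm_le (hp0 : 0 ≤ p) (α β : Measure E) :
    wassersteinDist p β α ≤ wassersteinDist p α β := by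
  rw [wd_def, wd_def]
  refine ENNReal.rpow_le_rpow ?_ (le_min (inv_nonneg.mpr hp0) zero_le_one)
  refine le_iInf₂ fun π hπ => ?_
  refine iInf₂_le_of_le (π.map Prod.swap) ⟨?_, ?_⟩ (le_of_eq ?_)
  · rw [Measure.map_map measurable_fst measurable_swap]
    exact hπ.2
  · rw [Measure.map_map measurable_snd measurable_swap]
    exact hπ.1
  · rw [lintegral_map costMeasurable measurable_swap]
    simp [edist_comm]

lemma wd_symm (hp0 : 0 ≤ p) (α β : Measure E) :
    wassersteinDist p α β = wassersteinDist p β α :=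
  le_antisymm (wd_symm_le hp0 β α) (wd_symm_le hp0 α β)

lemma wd_triangle_dirac (hp1 : 1 < p) (x : E) (α β : Measure E)
    [IsProbabilityMeasure α] [IsProbabilityMeasure β] :
    wassersteinDist p (Measure.dirac x) β
      ≤ wassersteinDist p (Measure.dirac x) α + wassersteinDist p α β := by
  have hp0 : 0 < p := one_pos.trans hp1
  rw [wd_eq_iInf hp1 α β, ENNReal.add_iInf]
  refine le_iInf fun π => ?_
  obtain ⟨π, hπ1, hπ2⟩ := π
  show wassersteinDist p (Measure.dirac x) β
    ≤ wassersteinDist p (Measure.dirac x) α + (∫⁻ z, edist z.1 z.2 ^ p ∂π) ^ p⁻¹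
  rw [wd_dirac_left hp1, wd_dirac_left hp1]
  have step1 : (∫⁻ w, edist x w ^ p ∂β) ^ p⁻¹
      = (∫⁻ z, edist x z.2 ^ p ∂π) ^ p⁻¹ := by
    rw [← hπ2, lintegral_map
      (show Measurable fun w : E => edist x w ^ p from
        (measurable_const.edist measurable_id).pow_const p) measurable_snd]
  have step2 : (∫⁻ z, edist x z.2 ^ p ∂π) ^ p⁻¹
      ≤ (∫⁻ z : E × E, ((fun z : E × E => edist x z.1) + fun z : E × E => edist z.1 z.2) z ^ p
          ∂π) ^ p⁻¹ := by
    refine ENNReal.rpow_le_rpow (lintegral_mono fun z => ?_) (inv_pos.mpr hp0).le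
    refine ENNReal.rpow_le_rpow ?_ hp0.le
    exact edist_triangle x z.1 z.2
  have step3 := ENNReal.lintegral_Lp_add_le (μ := π)
    (f := fun z : E × E => edist x z.1) (g := fun z : E × E => edist z.1 z.2)
    (measurable_const.edist measurable_fst).aemeasurable
    (measurable_fst.edist measurable_snd).aemeasurable hp1.le
  rw [one_div] at step3
  have step4 : (∫⁻ z, edist x z.1 ^ p ∂π) ^ p⁻¹
      = (∫⁻ u, edist x u ^ p ∂α) ^ p⁻¹ := by
    rw [← hπ1, lintegral_map
      (show Measurable fun w : E => edist x w ^ p from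
        (measurable_const.edist measurable_id).pow_const p) measurable_fst]
  calc (∫⁻ w, edist x w ^ p ∂β) ^ p⁻¹
      ≤ (∫⁻ z : E × E, ((fun z : E × E => edist x z.1) + fun z : E × E => edist z.1 z.2) z ^ p
          ∂π) ^ p⁻¹ := step1 ▸ step2
    _ ≤ (∫⁻ z, edist x z.1 ^ p ∂π) ^ p⁻¹
          + (∫⁻ z, edist z.1 z.2 ^ p ∂π) ^ p⁻¹ := step3
    _ ≤ (∫⁻ u, edist x u ^ p ∂α) ^ p⁻¹
          + (∫⁻ z, edist z.1 z.2 ^ p ∂π) ^ p⁻¹ := by rw [step4]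

lemma wd_map_le (hp1 : 1 < p) (α β : Measure E) (φ : E → E) (hφ : Measurable φ) :
    wassersteinDist p α (β.map φ)
      ≤ wassersteinDist p α β + (∫⁻ w, edist w (φ w) ^ p ∂β) ^ p⁻¹ := by
  have hp0 : 0 < p := one_pos.trans hp1
  rw [wd_eq_iInf hp1 α β, ENNReal.iInf_add]
  refine le_iInf fun π => ?_
  obtain ⟨π, hπ1, hπ2⟩ := π
  show wassersteinDist p α (β.map φ)
    ≤ (∫⁻ z, edist z.1 z.2 ^ p ∂π) ^ p⁻¹ + (∫⁻ w, edist w (φ w) ^ p ∂β) ^ p⁻¹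
  have hmapmeas : Measurable (Prod.map (id : E → E) φ) :=
    measurable_fst.prodMk (hφ.comp measurable_snd)
  have hmem : (π.map (Prod.map id φ)) ∈ Cpl α (β.map φ) := by
    constructor
    · rw [Measure.map_map measurable_fst hmapmeas]
      exact hπ1
    · rw [Measure.map_map measurable_snd hmapmeas,
        show Prod.snd ∘ Prod.map (id : E → E) φ = φ ∘ Prod.snd from rfl,
        ← Measure.map_map hφ measurable_snd, hπ2]
  refine le_trans (wd_le_coupling hp1 hmem) ?_
  rw [lintegral_map costMeasurable hmapmeas]
  have step2 : (∫⁻ z, edist (Prod.map id φ z).1 (Prod.map id φ z).2 ^ p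
        ∂π) ^ p⁻¹
      ≤ (∫⁻ z : E × E, ((fun z : E × E => edist z.1 z.2) + fun z : E × E => edist z.2 (φ z.2)) z ^ p
          ∂π) ^ p⁻¹ := by
    refine ENNReal.rpow_le_rpow (lintegral_mono fun z => ?_) (inv_pos.mpr hp0).le
    refine ENNReal.rpow_le_rpow ?_ hp0.le
    exact edist_triangle z.1 z.2 (φ z.2)
  have step3 := ENNReal.lintegral_Lp_add_le (μ := π)
    (f := fun z : E × E => edist z.1 z.2) (g := fun z : E × E => edist z.2 (φ z.2))
    (measurable_fst.edist measurable_snd).aemeasurable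
    (measurable_snd.edist (hφ.comp measurable_snd)).aemeasurable hp1.le
  rw [one_div] at step3
  have step4 : (∫⁻ z, edist z.2 (φ z.2) ^ p ∂π) ^ p⁻¹
      = (∫⁻ w, edist w (φ w) ^ p ∂β) ^ p⁻¹ := by
    rw [← hπ2, lintegral_map
      (show Measurable fun w : E => edist w (φ w) ^ p from
        (measurable_id.edist hφ).pow_const p) measurable_snd]
  calc (∫⁻ z, edist (Prod.map id φ z).1 (Prod.map id φ z).2 ^ p
        ∂π) ^ p⁻¹
      ≤ (∫⁻ z : E × E, ((fun z : E × E => edist z.1 z.2) + fun z : E × E => edist z.2 (φ z.2)) z ^ p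
          ∂π) ^ p⁻¹ := step2
    _ ≤ (∫⁻ z, edist z.1 z.2 ^ p ∂π) ^ p⁻¹
          + (∫⁻ z, edist z.2 (φ z.2) ^ p ∂π) ^ p⁻¹ := step3
    _ = (∫⁻ z, edist z.1 z.2 ^ p ∂π) ^ p⁻¹
          + (∫⁻ w, edist w (φ w) ^ p ∂β) ^ p⁻¹ := by rw [step4]

lemma edist_dil (x y : E) {c : ℝ} (hc : 0 ≤ c) :
    edist x (x + c • (y - x)) = ENNReal.ofReal c * edist x y := by
  rw [edist_dist, edist_dist, dist_eq_norm, dist_eq_norm,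
    show x - (x + c • (y - x)) = c • (x - y) by rw [smul_sub, smul_sub]; abel,
    norm_smul, Real.norm_eq_abs, abs_of_nonneg hc, ENNReal.ofReal_mul hc]

lemma edist_dil₂ (x y : E) (a b : ℝ) :
    edist (x + a • (y - x)) (x + b • (y - x)) = ENNReal.ofReal |a - b| * edist x y := by
  rw [edist_dist, edist_dist, dist_eq_norm, dist_eq_norm,
    show (x + a • (y - x)) - (x + b • (y - x)) = (a - b) • (y - x) by rw [sub_smul]; abel,
    norm_smul, Real.norm_eq_abs, ENNReal.ofReal_mul (abs_nonneg _), norm_sub_rev]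

lemma edist_dil₁ (x y : E) (c : ℝ) :
    edist y (x + c • (y - x)) = ENNReal.ofReal |1 - c| * edist x y := by
  have h := edist_dil₂ x y 1 c
  rwa [one_smul, add_sub_cancel] at h

lemma lint_scaled (hp0 : 0 < p) (β : Measure E) (x : E) (c : ℝ≥0∞) :
    ∫⁻ y, (c * edist x y) ^ p ∂β = c ^ p * ∫⁻ y, edist x y ^ p ∂β := by
  simp_rw [ENNReal.mul_rpow_of_nonneg _ _ hp0.le]
  exact lintegral_const_mul _ ((measurable_const.edist measurable_id).pow_const p)

lemma ofReal_cancel {s t : ℝ} (hs : 0 ≤ s) (hst : s ≤ t) {d : ℝ≥0∞}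
    (h : ENNReal.ofReal t ≤ ENNReal.ofReal s + d) : ENNReal.ofReal (t - s) ≤ d := by
  have h2 : ENNReal.ofReal s + ENNReal.ofReal (t - s) ≤ ENNReal.ofReal s + d := by
    rw [← ENNReal.ofReal_add hs (by linarith)]
    convert h using 2
    ring
  exact (ENNReal.add_le_add_iff_left ENNReal.ofReal_ne_top).1 h2

lemma ae_eq_of_lintegral_le {α : Type*} [MeasurableSpace α] {m : Measure α} {f g : α → ℝ≥0∞}
    (hf : Measurable f) (hg : Measurable g) (hle : ∀ z, f z ≤ g z)
    (hint : ∫⁻ z, g z ∂m ≤ ∫⁻ z, f z ∂m) (hfin : ∫⁻ z, f z ∂m ≠ ⊤) :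
    ∀ᵐ z ∂m, f z = g z := by
  have hsub : ∫⁻ z, (g z - f z) ∂m = 0 := by
    rw [lintegral_sub hf hfin (ae_of_all _ hle)]
    exact tsub_eq_zero_iff_le.2 hint
  have h0 := (lintegral_eq_zero_iff (hg.sub hf)).1 hsub
  filter_upwards [h0] with z hz
  exact le_antisymm (hle z) (tsub_eq_zero_iff_le.1 hz)

lemma conv_bound (hp1 : 1 < p) {θ : ℝ} (hθ0 : 0 < θ) (hθ1 : θ < 1) {x y : ℝ}
    (hx : 0 ≤ x) (hy : 0 ≤ y) :
    (x + y) ^ p ≤ θ ^ (1 - p) * x ^ p + (1 - θ) ^ (1 - p) * y ^ p := by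
  have h1θ : (0:ℝ) < 1 - θ := by linarith
  have key := (strictConvexOn_rpow hp1).convexOn.2 (Set.mem_Ici.2 (div_nonneg hx hθ0.le))
    (Set.mem_Ici.2 (div_nonneg hy h1θ.le)) hθ0.le h1θ.le (by ring)
  simp only [smul_eq_mul] at key
  have e1 : θ * (x / θ) + (1 - θ) * (y / (1 - θ)) = x + y := by field_simp
  have e2 : θ * (x / θ) ^ p = θ ^ (1 - p) * x ^ p := by
    rw [Real.div_rpow hx hθ0.le, Real.rpow_sub hθ0, Real.rpow_one]
    field_simp
  have e3 : (1 - θ) * (y / (1 - θ)) ^ p = (1 - θ) ^ (1 - p) * y ^ p := by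
    rw [Real.div_rpow hy h1θ.le, Real.rpow_sub h1θ, Real.rpow_one]
    field_simp
  rw [e1, e2, e3] at key
  exact key

lemma conv_eq (hp1 : 1 < p) {θ : ℝ} (hθ0 : 0 < θ) (hθ1 : θ < 1) {x y : ℝ}
    (hx : 0 ≤ x) (hy : 0 ≤ y)
    (heq : (x + y) ^ p = θ ^ (1 - p) * x ^ p + (1 - θ) ^ (1 - p) * y ^ p) :
    (1 - θ) * x = θ * y := by
  have h1θ : (0:ℝ) < 1 - θ := by linarith
  by_contra hne
  have hab : x / θ ≠ y / (1 - θ) := by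
    intro h
    apply hne
    field_simp at h
    linarith
  have key := (strictConvexOn_rpow hp1).2 (Set.mem_Ici.2 (div_nonneg hx hθ0.le))
    (Set.mem_Ici.2 (div_nonneg hy h1θ.le)) hab hθ0 h1θ (by ring)
  simp only [smul_eq_mul] at key
  have e1 : θ * (x / θ) + (1 - θ) * (y / (1 - θ)) = x + y := by field_simp
  have e2 : θ * (x / θ) ^ p = θ ^ (1 - p) * x ^ p := by
    rw [Real.div_rpow hx hθ0.le, Real.rpow_sub hθ0, Real.rpow_one]
    field_simp
  have e3 : (1 - θ) * (y / (1 - θ)) ^ p = (1 - θ) ^ (1 - p) * y ^ p := by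
    rw [Real.div_rpow hy h1θ.le, Real.rpow_sub h1θ, Real.rpow_one]
    field_simp
  rw [e1, e2, e3] at key
  exact absurd heq (ne_of_lt key)

lemma eq_dirac_of_ae_eq {m : Measure E} [IsProbabilityMeasure m] {a : E}
    (h : ∀ᵐ u ∂m, u = a) : m = Measure.dirac a := by
  have h0 : m {u | ¬ u = a} = 0 := ae_iff.1 h
  ext s hs
  rw [Measure.dirac_apply' _ hs]
  by_cases ha : a ∈ s
  · rw [Set.indicator_of_mem ha]
    have hsc : m sᶜ = 0 := by
      refine measure_mono_null ?_ h0
      intro u hu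
      show ¬ u = a
      intro hua
      exact hu (by rw [hua]; exact ha)
    simpa using (prob_compl_eq_zero_iff hs).1 hsc
  · rw [Set.indicator_of_notMem ha]
    refine measure_mono_null ?_ h0
    intro u hu
    show ¬ u = a
    intro hua
    exact ha (by rw [← hua]; exact hu)

lemma forward (hp1 : 1 < p) (x : E) {T : ℝ} (hT : 0 < T) (γ : ℝ → Measure E)
    (hmem : ∀ t ∈ Set.Icc (0:ℝ) T, MemWp p (γ t))
    (hγ0 : γ 0 = Measure.dirac x)
    (hgeo : ∀ s ∈ Set.Icc (0:ℝ) T, ∀ t ∈ Set.Icc (0:ℝ) T,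
      wassersteinDist p (γ s) (γ t) = ENNReal.ofReal |s - t|) :
    ∃ γ' : ℝ → Measure E,
      (∀ t : ℝ, 0 ≤ t → MemWp p (γ' t)) ∧
      (∀ s : ℝ, 0 ≤ s → ∀ t : ℝ, 0 ≤ t →
        wassersteinDist p (γ' s) (γ' t) = ENNReal.ofReal |s - t|) ∧
      (∀ t ∈ Set.Icc (0:ℝ) T, γ' t = γ t) := by
  have hp0 : 0 < p := one_pos.trans hp1
  haveI hPT : IsProbabilityMeasure (γ T) := (hmem T ⟨hT.le, le_rfl⟩).1
  set D : ℝ → E → E := fun t y => x + (t / T) • (y - x) with hD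
  have hDmeas : ∀ t, Measurable (D t) :=
    fun t => ((measurable_id.sub measurable_const).const_smul (t/T)).const_add x
  have MTdef : ∫⁻ w, edist x w ^ p ∂(γ T) = ENNReal.ofReal T ^ p := by
    have h := hgeo 0 ⟨le_rfl, hT.le⟩ T ⟨hT.le, le_rfl⟩
    rw [hγ0, wd_dirac_left hp1] at h
    have h2 := congrArg (fun z : ℝ≥0∞ => z ^ p) h
    rw [ENNReal.rpow_inv_rpow hp0.ne'] at h2
    rw [h2]
    congr 2
    rw [zero_sub, abs_neg, abs_of_pos hT]
  have hmomD : ∀ t, 0 ≤ t → ∫⁻ w, edist x w ^ p ∂((γ T).map (D t))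
      = ENNReal.ofReal t ^ p := by
    intro t ht
    rw [lintegral_map (show Measurable fun w : E => edist x w ^ p from
      (measurable_const.edist measurable_id).pow_const p) (hDmeas t)]
    have hpt : ∀ y, edist x (D t y) ^ p = (ENNReal.ofReal (t/T) * edist x y) ^ p :=
      fun y => by rw [edist_dil x y (div_nonneg ht hT.le)]
    rw [lintegral_congr fun y => hpt y, lint_scaled hp0, MTdef,
      ← ENNReal.mul_rpow_of_nonneg _ _ hp0.le,
      ← ENNReal.ofReal_mul (div_nonneg ht hT.le), div_mul_cancel₀ _ hT.ne']
  have hd : ∀ u, 0 ≤ u →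
      wassersteinDist p (Measure.dirac x) (if u ≤ T then γ u else (γ T).map (D u))
        = ENNReal.ofReal u := by
    intro u hu
    by_cases h : u ≤ T
    · rw [if_pos h]
      have h3 := hgeo 0 ⟨le_rfl, hT.le⟩ u ⟨hu, h⟩
      rw [hγ0] at h3
      rw [h3, zero_sub, abs_neg, abs_of_nonneg hu]
    · rw [if_neg h]
      haveI : IsProbabilityMeasure ((γ T).map (D u)) :=
        Measure.isProbabilityMeasure_map (hDmeas u).aemeasurable
      rw [wd_dirac_left hp1, hmomD u hu, ENNReal.rpow_rpow_inv hp0.ne']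
  have hPall : ∀ u, 0 ≤ u →
      IsProbabilityMeasure (if u ≤ T then γ u else (γ T).map (D u)) := by
    intro u hu
    by_cases h : u ≤ T
    · rw [if_pos h]; exact (hmem u ⟨hu, h⟩).1
    · rw [if_neg h]; exact Measure.isProbabilityMeasure_map (hDmeas u).aemeasurable
  have aux : ∀ s t, 0 ≤ s → s ≤ t →
      wassersteinDist p (if s ≤ T then γ s else (γ T).map (D s))
        (if t ≤ T then γ t else (γ T).map (D t)) = ENNReal.ofReal (t - s) := by
    intro s t hs hst
    have ht : 0 ≤ t := hs.trans hst
    have hlow : ENNReal.ofReal (t - s)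
        ≤ wassersteinDist p (if s ≤ T then γ s else (γ T).map (D s))
          (if t ≤ T then γ t else (γ T).map (D t)) := by
      haveI := hPall s hs
      haveI := hPall t ht
      have htri := wd_triangle_dirac hp1 x (if s ≤ T then γ s else (γ T).map (D s))
        (if t ≤ T then γ t else (γ T).map (D t))
      rw [hd s hs, hd t ht] at htri
      exact ofReal_cancel hs hst htri
    refine le_antisymm ?_ hlow
    by_cases h2 : t ≤ T
    · have h1 : s ≤ T := hst.trans h2
      rw [if_pos h1, if_pos h2, hgeo s ⟨hs, h1⟩ t ⟨ht, h2⟩, abs_sub_comm,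
        abs_of_nonneg (by linarith)]
    · push_neg at h2
      by_cases h1 : s ≤ T
      · rw [if_pos h1, if_neg (not_le.mpr h2)]
        have hmaple := wd_map_le hp1 (γ s) (γ T) (D t) (hDmeas t)
        have hsec : (∫⁻ w, edist w (D t w) ^ p ∂(γ T)) ^ p⁻¹ = ENNReal.ofReal (t - T) := by
          have hpt : ∀ w, edist w (D t w) ^ p
              = (ENNReal.ofReal ((t - T)/T) * edist x w) ^ p := by
            intro w
            rw [show edist w (D t w) = ENNReal.ofReal |1 - t/T| * edist x w from
              edist_dil₁ x w (t/T)]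
            congr 3
            have he : (1:ℝ) - t/T ≤ 0 := by
              rw [sub_nonpos]
              exact (one_le_div hT).mpr h2.le
            rw [abs_of_nonpos he]
            field_simp
            ring
          rw [lintegral_congr fun w => hpt w, lint_scaled hp0, MTdef,
            ← ENNReal.mul_rpow_of_nonneg _ _ hp0.le,
            ← ENNReal.ofReal_mul (div_nonneg (by linarith) hT.le),
            div_mul_cancel₀ _ hT.ne', ENNReal.rpow_rpow_inv hp0.ne']
        rw [hsec] at hmaple
        refine hmaple.trans ?_
        rw [hgeo s ⟨hs, h1⟩ T ⟨hT.le, le_rfl⟩, abs_sub_comm, abs_of_nonneg (by linarith),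
          ← ENNReal.ofReal_add (by linarith) (by linarith),
          show T - s + (t - T) = t - s by ring]
      · push_neg at h1
        rw [if_neg (not_le.mpr h1), if_neg (not_le.mpr h2)]
        have hmemπ : ((γ T).map (fun y => (D s y, D t y)))
            ∈ Cpl ((γ T).map (D s)) ((γ T).map (D t)) := by
          constructor
          · rw [Measure.map_map measurable_fst ((hDmeas s).prodMk (hDmeas t))]; rfl
          · rw [Measure.map_map measurable_snd ((hDmeas s).prodMk (hDmeas t))]; rfl
        refine le_trans (wd_le_coupling hp1 hmemπ) ?_
        rw [lintegral_map costMeasurable ((hDmeas s).prodMk (hDmeas t))]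
        have hpt : ∀ y, edist (D s y) (D t y) ^ p
            = (ENNReal.ofReal ((t - s)/T) * edist x y) ^ p := by
          intro y
          rw [show edist (D s y) (D t y) = ENNReal.ofReal |s/T - t/T| * edist x y from
            edist_dil₂ x y (s/T) (t/T)]
          congr 3
          rw [show s/T - t/T = (s - t)/T by ring, abs_div, abs_of_pos hT,
            abs_of_nonpos (by linarith)]
          congr 1
          ring
        rw [lintegral_congr fun y => hpt y, lint_scaled hp0, MTdef,
          ← ENNReal.mul_rpow_of_nonneg _ _ hp0.le,
          ← ENNReal.ofReal_mul (div_nonneg (by linarith) hT.le),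
          div_mul_cancel₀ _ hT.ne', ENNReal.rpow_rpow_inv hp0.ne']
  refine ⟨fun u => if u ≤ T then γ u else (γ T).map (D u), ?_, ?_, ?_⟩
  · intro u hu
    by_cases h : u ≤ T
    · simp only [if_pos h]; exact hmem u ⟨hu, h⟩
    · simp only [if_neg h]
      refine ⟨Measure.isProbabilityMeasure_map (hDmeas u).aemeasurable, ⟨x, ?_⟩⟩
      rw [lintegral_congr fun w => by rw [edist_comm], hmomD u hu]
      exact ENNReal.rpow_ne_top_of_nonneg hp0.le ENNReal.ofReal_ne_top
  · intro s hs t ht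
    simp only
    rcases le_total s t with h | h
    · rw [abs_of_nonpos (by linarith), neg_sub]
      exact aux s t hs h
    · rw [abs_of_nonneg (by linarith), wd_symm hp0.le]
      exact aux t s ht h
  · intro t htI
    simp only [if_pos htI.2]

lemma backward (hp1 : 1 < p) (μ : Measure E) (hμ : MemWp p μ)
    (H : ∀ T : ℝ, 0 < T → ∀ γ : ℝ → Measure E,
        (∀ t ∈ Set.Icc (0:ℝ) T, MemWp p (γ t)) →
        γ 0 = μ →
        (∀ s ∈ Set.Icc (0:ℝ) T, ∀ t ∈ Set.Icc (0:ℝ) T,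
          wassersteinDist p (γ s) (γ t) = ENNReal.ofReal |s - t|) →
        ∃ γ' : ℝ → Measure E,
          (∀ t : ℝ, 0 ≤ t → MemWp p (γ' t)) ∧
          (∀ s : ℝ, 0 ≤ s → ∀ t : ℝ, 0 ≤ t →
            wassersteinDist p (γ' s) (γ' t) = ENNReal.ofReal |s - t|) ∧
          (∀ t ∈ Set.Icc (0:ℝ) T, γ' t = γ t)) :
    ∃ x : E, μ = Measure.dirac x := by
  have hp0 : 0 < p := one_pos.trans hp1
  obtain ⟨hprob, x₀, hMfin0⟩ := hμ
  haveI := hprob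
  have hMfin : ∫⁻ y, edist x₀ y ^ p ∂μ ≠ ⊤ := by
    rw [lintegral_congr fun y => by rw [edist_comm]]
    exact hMfin0
  set M := ∫⁻ y, edist x₀ y ^ p ∂μ with hM
  by_cases hM0 : M = 0
  · refine ⟨x₀, eq_dirac_of_ae_eq ?_⟩
    have h0 := (lintegral_eq_zero_iff
      ((measurable_const.edist measurable_id).pow_const p)).1 hM0
    filter_upwards [h0] with y hy
    have h1 : edist x₀ y = 0 := by
      rcases ENNReal.rpow_eq_zero_iff.1 hy with ⟨h, _⟩ | ⟨h, hlt⟩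
      · exact h
      · exact absurd hlt (not_lt.mpr hp0.le)
    exact (edist_eq_zero.1 h1).symm
  · set L := (M ^ p⁻¹).toReal with hL
    have hMpne : M ^ p⁻¹ ≠ ⊤ := ENNReal.rpow_ne_top_of_nonneg (inv_pos.mpr hp0).le hMfin
    have hMp0 : M ^ p⁻¹ ≠ 0 := by
      simp only [ne_eq, ENNReal.rpow_eq_zero_iff, not_or, not_and, not_lt]
      constructor
      · intro h; exact absurd h hM0
      · intro h; exact absurd h hMfin
    have hLpos : 0 < L := ENNReal.toReal_pos hMp0 hMpne
    have hofL : ENNReal.ofReal L = M ^ p⁻¹ := ENNReal.ofReal_toReal hMpne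
    have hMeq : ENNReal.ofReal L ^ p = M := by
      rw [hofL, ENNReal.rpow_inv_rpow hp0.ne']
    set c : ℝ → E → E := fun t y => x₀ + (1 - t / L) • (y - x₀) with hc
    have hcmeas : ∀ t, Measurable (c t) :=
      fun t => ((measurable_id.sub measurable_const).const_smul _).const_add x₀
    have hγ0 : μ.map (c 0) = μ := by
      have hid : c 0 = id := by
        funext y
        simp [hc]
      rw [hid, Measure.map_id]
    have hγL : μ.map (c L) = Measure.dirac x₀ := by
      have hcl : c L = fun _ => x₀ := by
        funext y
        simp [hc, div_self hLpos.ne']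
      rw [hcl, Measure.map_const]
      simp
    haveI hPc : ∀ t, IsProbabilityMeasure (μ.map (c t)) :=
      fun t => Measure.isProbabilityMeasure_map (hcmeas t).aemeasurable
    have hmomc : ∀ t ∈ Set.Icc (0:ℝ) L, ∫⁻ w, edist x₀ w ^ p ∂(μ.map (c t))
        = ENNReal.ofReal (L - t) ^ p := by
      intro t htI
      rw [lintegral_map (show Measurable fun w : E => edist x₀ w ^ p from
        (measurable_const.edist measurable_id).pow_const p) (hcmeas t)]
      have hfac : (0:ℝ) ≤ 1 - t / L := by
        rw [sub_nonneg]
        exact div_le_one_of_le₀ htI.2 hLpos.le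
      have hpt : ∀ y, edist x₀ (c t y) ^ p
          = (ENNReal.ofReal (1 - t/L) * edist x₀ y) ^ p :=
        fun y => by rw [edist_dil x₀ y hfac]
      rw [lintegral_congr fun y => hpt y, lint_scaled hp0, ← hM, ← hMeq,
        ← ENNReal.mul_rpow_of_nonneg _ _ hp0.le,
        ← ENNReal.ofReal_mul hfac,
        show (1 - t/L) * L = L - t by field_simp]
    have hdirc : ∀ t ∈ Set.Icc (0:ℝ) L,
        wassersteinDist p (Measure.dirac x₀) (μ.map (c t)) = ENNReal.ofReal (L - t) := by
      intro t htI
      rw [wd_dirac_left hp1, hmomc t htI, ENNReal.rpow_rpow_inv hp0.ne']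
    have hgeoaux : ∀ s t, 0 ≤ s → s ≤ t → t ≤ L →
        wassersteinDist p (μ.map (c s)) (μ.map (c t)) = ENNReal.ofReal (t - s) := by
      intro s t hs hst htL
      have hsI : s ∈ Set.Icc (0:ℝ) L := ⟨hs, by linarith⟩
      have htI : t ∈ Set.Icc (0:ℝ) L := ⟨by linarith, htL⟩
      refine le_antisymm ?_ ?_
      · have hmemπ : (μ.map (fun y => (c s y, c t y)))
            ∈ Cpl (μ.map (c s)) (μ.map (c t)) := by
          constructor
          · rw [Measure.map_map measurable_fst ((hcmeas s).prodMk (hcmeas t))]; rfl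
          · rw [Measure.map_map measurable_snd ((hcmeas s).prodMk (hcmeas t))]; rfl
        refine le_trans (wd_le_coupling hp1 hmemπ) ?_
        rw [lintegral_map costMeasurable ((hcmeas s).prodMk (hcmeas t))]
        have hpt : ∀ y, edist (c s y) (c t y) ^ p
            = (ENNReal.ofReal ((t - s)/L) * edist x₀ y) ^ p := by
          intro y
          rw [show edist (c s y) (c t y)
              = ENNReal.ofReal |(1 - s/L) - (1 - t/L)| * edist x₀ y from
            edist_dil₂ x₀ y (1 - s/L) (1 - t/L)]
          congr 3
          rw [show (1 - s/L) - (1 - t/L) = (t - s)/L by ring,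
            abs_of_nonneg (div_nonneg (by linarith) hLpos.le)]
        rw [lintegral_congr fun y => hpt y, lint_scaled hp0, ← hM, ← hMeq,
          ← ENNReal.mul_rpow_of_nonneg _ _ hp0.le,
          ← ENNReal.ofReal_mul (div_nonneg (by linarith) hLpos.le),
          div_mul_cancel₀ _ hLpos.ne', ENNReal.rpow_rpow_inv hp0.ne']
      · have htri := wd_triangle_dirac hp1 x₀ (μ.map (c t)) (μ.map (c s))
        rw [hdirc s hsI, hdirc t htI] at htri
        have hres := ofReal_cancel (by linarith) (by linarith) htri
        rw [show (L - s) - (L - t) = t - s by ring] at hres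
        rwa [wd_symm hp0.le]
    have hgeo : ∀ s ∈ Set.Icc (0:ℝ) L, ∀ t ∈ Set.Icc (0:ℝ) L,
        wassersteinDist p (μ.map (c s)) (μ.map (c t)) = ENNReal.ofReal |s - t| := by
      intro s hsI t htI
      rcases le_total s t with h | h
      · rw [abs_of_nonpos (by linarith), neg_sub]
        exact hgeoaux s t hsI.1 h htI.2
      · rw [abs_of_nonneg (by linarith), wd_symm hp0.le]
        exact hgeoaux t s htI.1 h hsI.2
    have hmemW : ∀ t ∈ Set.Icc (0:ℝ) L, MemWp p (μ.map (c t)) := by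
      intro t htI
      refine ⟨hPc t, ⟨x₀, ?_⟩⟩
      rw [lintegral_congr fun w => by rw [edist_comm], hmomc t htI]
      exact ENNReal.rpow_ne_top_of_nonneg hp0.le ENNReal.ofReal_ne_top
    obtain ⟨γ', h1, h2, h3⟩ := H L hLpos (fun t => μ.map (c t)) hmemW hγ0 hgeo
    set ν := γ' (L + 1) with hν
    haveI hνP : IsProbabilityMeasure ν := (h1 (L+1) (by linarith)).1
    have hγ'L : γ' L = Measure.dirac x₀ := by
      rw [h3 L ⟨hLpos.le, le_rfl⟩]
      exact hγL
    have hγ'0 : γ' 0 = μ := by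
      rw [h3 0 ⟨le_rfl, hLpos.le⟩]
      exact hγ0
    have hdν : wassersteinDist p (Measure.dirac x₀) ν = ENNReal.ofReal 1 := by
      have h4 := h2 L hLpos.le (L+1) (by linarith)
      rw [hγ'L] at h4
      rw [h4, show L - (L+1) = -1 by ring, abs_neg, abs_one]
    have hdμν : wassersteinDist p μ ν = ENNReal.ofReal (L + 1) := by
      have h4 := h2 0 le_rfl (L+1) (by linarith)
      rw [hγ'0] at h4
      rw [h4, show (0:ℝ) - (L+1) = -(L+1) by ring, abs_neg, abs_of_pos (by linarith)]
    have hMν : ∫⁻ w, edist x₀ w ^ p ∂ν = 1 := by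
      have h4 := hdν
      rw [wd_dirac_left hp1] at h4
      have h5 := congrArg (fun z : ℝ≥0∞ => z ^ p) h4
      rw [ENNReal.rpow_inv_rpow hp0.ne'] at h5
      rw [h5, ENNReal.ofReal_one, ENNReal.one_rpow]
    have hmemprod : μ.prod ν ∈ Cpl μ ν := by
      constructor
      · rw [Measure.map_fst_prod]; simp
      · rw [Measure.map_snd_prod]; simp
    have hlower : ENNReal.ofReal (L+1) ^ p ≤ ∫⁻ z, edist z.1 z.2 ^ p ∂(μ.prod ν) := by
      have h4 := hdμν
      rw [wd_def, hmin hp1] at h4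
      have h5 := congrArg (fun z : ℝ≥0∞ => z ^ p) h4
      rw [ENNReal.rpow_inv_rpow hp0.ne'] at h5
      rw [← h5]
      exact iInf₂_le _ hmemprod
    set θ : ℝ := L / (L + 1) with hθ
    have hK : (0:ℝ) < L + 1 := by linarith
    have hθ0 : 0 < θ := div_pos hLpos hK
    have hθ1 : θ < 1 := by
      rw [hθ, div_lt_one hK]
      linarith
    set A : ℝ≥0∞ := ENNReal.ofReal (θ ^ (1 - p)) with hA
    set B : ℝ≥0∞ := ENNReal.ofReal ((1 - θ) ^ (1 - p)) with hB
    have hpt1 : ∀ z : E × E, edist z.1 z.2 ^ p ≤ (edist x₀ z.1 + edist x₀ z.2) ^ p := by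
      intro z
      refine ENNReal.rpow_le_rpow ?_ hp0.le
      rw [edist_comm x₀ z.1]
      exact edist_triangle z.1 x₀ z.2
    have hpt2 : ∀ z : E × E, (edist x₀ z.1 + edist x₀ z.2) ^ p
        ≤ A * edist x₀ z.1 ^ p + B * edist x₀ z.2 ^ p := by
      intro z
      rw [edist_dist, edist_dist, ← ENNReal.ofReal_add dist_nonneg dist_nonneg,
        ENNReal.ofReal_rpow_of_nonneg (by positivity) hp0.le,
        ENNReal.ofReal_rpow_of_nonneg dist_nonneg hp0.le,
        ENNReal.ofReal_rpow_of_nonneg dist_nonneg hp0.le, hA, hB,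
        ← ENNReal.ofReal_mul (Real.rpow_nonneg hθ0.le _),
        ← ENNReal.ofReal_mul (Real.rpow_nonneg (by linarith) _),
        ← ENNReal.ofReal_add
          (mul_nonneg (Real.rpow_nonneg hθ0.le _) (Real.rpow_nonneg dist_nonneg _))
          (mul_nonneg (Real.rpow_nonneg (by linarith) _) (Real.rpow_nonneg dist_nonneg _))]
      exact ENNReal.ofReal_le_ofReal (conv_bound hp1 hθ0 hθ1 dist_nonneg dist_nonneg)
    have hintF : ∫⁻ z, edist x₀ z.1 ^ p ∂(μ.prod ν) = M := by
      have h6 := lintegral_map (μ := μ.prod ν)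
        (show Measurable fun w : E => edist x₀ w ^ p from
          (measurable_const.edist measurable_id).pow_const p)
        (measurable_fst : Measurable (Prod.fst : E × E → E))
      rw [hmemprod.1] at h6
      exact h6.symm
    have hintG : ∫⁻ z, edist x₀ z.2 ^ p ∂(μ.prod ν) = 1 := by
      have h6 := lintegral_map (μ := μ.prod ν)
        (show Measurable fun w : E => edist x₀ w ^ p from
          (measurable_const.edist measurable_id).pow_const p)
        (measurable_snd : Measurable (Prod.snd : E × E → E))
      rw [hmemprod.2] at h6
      rw [← h6]
      exact hMν
    have e1θ : (1:ℝ) - θ = (L+1)⁻¹ := by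
      rw [hθ]
      field_simp
      ring
    have e2θ : θ ^ (1-p) = (L+1) ^ (p-1) / L ^ (p-1) := by
      rw [hθ, show (1:ℝ) - p = -(p-1) by ring,
        Real.rpow_neg (div_nonneg hLpos.le hK.le),
        Real.div_rpow hLpos.le hK.le, inv_div]
    have e3θ : ((L+1)⁻¹ : ℝ) ^ (1-p) = (L+1) ^ (p-1) := by
      rw [show (1:ℝ) - p = -(p-1) by ring, Real.inv_rpow hK.le, Real.rpow_neg hK.le,
        inv_inv]
    have e4θ : L ^ p / L ^ (p-1) = L := by
      rw [← Real.rpow_sub hLpos, show p - (p-1) = 1 by ring, Real.rpow_one]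
    have hreal : θ ^ (1-p) * L ^ p + (1-θ) ^ (1-p) = (L+1) ^ p := by
      rw [e1θ, e2θ, e3θ, div_mul_eq_mul_div, mul_div_assoc, e4θ, ← mul_add_one,
        ← Real.rpow_add_one hK.ne', sub_add_cancel]
    have hmid : ∫⁻ z, (A * edist x₀ z.1 ^ p + B * edist x₀ z.2 ^ p) ∂(μ.prod ν)
        = ENNReal.ofReal (L+1) ^ p := by
      rw [lintegral_add_left (f := fun z : E × E => A * edist x₀ z.1 ^ p) (measurable_const.mul
          ((measurable_const.edist measurable_fst).pow_const p)) _,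
        lintegral_const_mul A ((measurable_const.edist measurable_fst).pow_const p),
        lintegral_const_mul B ((measurable_const.edist measurable_snd).pow_const p),
        hintF, hintG, mul_one, ← hMeq, hA, hB,
        ENNReal.ofReal_rpow_of_nonneg hLpos.le hp0.le,
        ← ENNReal.ofReal_mul (Real.rpow_nonneg hθ0.le _),
        ← ENNReal.ofReal_add
          (mul_nonneg (Real.rpow_nonneg hθ0.le _) (Real.rpow_nonneg hLpos.le _))
          (Real.rpow_nonneg (by linarith) _),
        hreal, ENNReal.ofReal_rpow_of_nonneg hK.le hp0.le]
    have hFGmeas : Measurable fun z : E × E => (edist x₀ z.1 + edist x₀ z.2) ^ p :=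
      ((measurable_const.edist measurable_fst).add
        (measurable_const.edist measurable_snd)).pow_const p
    have hABmeas : Measurable fun z : E × E => A * edist x₀ z.1 ^ p + B * edist x₀ z.2 ^ p :=
      (measurable_const.mul ((measurable_const.edist measurable_fst).pow_const p)).add
        (measurable_const.mul ((measurable_const.edist measurable_snd).pow_const p))
    have hup : ∫⁻ z, (edist x₀ z.1 + edist x₀ z.2) ^ p ∂(μ.prod ν)
        ≤ ENNReal.ofReal (L+1) ^ p :=
      le_trans (lintegral_mono hpt2) (le_of_eq hmid)
    have hnetop : ENNReal.ofReal (L+1) ^ p ≠ ⊤ :=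
      ENNReal.rpow_ne_top_of_nonneg hp0.le ENNReal.ofReal_ne_top
    have heq1 : ∀ᵐ z ∂(μ.prod ν),
        edist z.1 z.2 ^ p = (edist x₀ z.1 + edist x₀ z.2) ^ p := by
      refine ae_eq_of_lintegral_le costMeasurable hFGmeas hpt1 (hup.trans hlower) ?_
      exact ne_top_of_le_ne_top hnetop (le_trans (lintegral_mono hpt1) hup)
    have heq2 : ∀ᵐ z ∂(μ.prod ν), (edist x₀ z.1 + edist x₀ z.2) ^ p
        = A * edist x₀ z.1 ^ p + B * edist x₀ z.2 ^ p := by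
      refine ae_eq_of_lintegral_le hFGmeas hABmeas hpt2 ?_ ?_
      · rw [hmid]
        exact hlower.trans (lintegral_mono hpt1)
      · exact ne_top_of_le_ne_top hnetop hup
    have hae_real : ∀ᵐ z ∂(μ.prod ν),
        dist z.1 z.2 = dist x₀ z.1 + dist x₀ z.2
          ∧ (1 - θ) * dist x₀ z.1 = θ * dist x₀ z.2 := by
      filter_upwards [heq1, heq2] with z e1 e2
      constructor
      · have h7 : edist z.1 z.2 = edist x₀ z.1 + edist x₀ z.2 := by
          have h8 := congrArg (fun w : ℝ≥0∞ => w ^ p⁻¹) e1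
          simpa only [ENNReal.rpow_rpow_inv hp0.ne'] using h8
        rw [edist_dist, edist_dist, edist_dist,
          ← ENNReal.ofReal_add dist_nonneg dist_nonneg] at h7
        exact (ENNReal.ofReal_eq_ofReal_iff dist_nonneg (by positivity)).1 h7
      · rw [edist_dist, edist_dist, ← ENNReal.ofReal_add dist_nonneg dist_nonneg,
          ENNReal.ofReal_rpow_of_nonneg (by positivity) hp0.le,
          ENNReal.ofReal_rpow_of_nonneg dist_nonneg hp0.le,
          ENNReal.ofReal_rpow_of_nonneg dist_nonneg hp0.le, hA, hB,
          ← ENNReal.ofReal_mul (Real.rpow_nonneg hθ0.le _),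
          ← ENNReal.ofReal_mul (Real.rpow_nonneg (by linarith) _),
          ← ENNReal.ofReal_add
            (mul_nonneg (Real.rpow_nonneg hθ0.le _) (Real.rpow_nonneg dist_nonneg _))
            (mul_nonneg (Real.rpow_nonneg (by linarith) _)
              (Real.rpow_nonneg dist_nonneg _))] at e2
        have h9 := (ENNReal.ofReal_eq_ofReal_iff (by positivity)
          (add_nonneg
            (mul_nonneg (Real.rpow_nonneg hθ0.le _) (Real.rpow_nonneg dist_nonneg _))
            (mul_nonneg (Real.rpow_nonneg (by linarith) _)
              (Real.rpow_nonneg dist_nonneg _)))).1 e2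
        exact conv_eq hp1 hθ0 hθ1 dist_nonneg dist_nonneg h9
    haveI : (ae μ).NeBot := MeasureTheory.ae_neBot.2 (IsProbabilityMeasure.ne_zero μ)
    haveI : (ae ν).NeBot := MeasureTheory.ae_neBot.2 (IsProbabilityMeasure.ne_zero ν)
    have hfub := Measure.ae_ae_of_ae_prod hae_real
    obtain ⟨u₀, hu₀⟩ := hfub.exists
    have hFconst : ∀ᵐ u ∂μ, dist x₀ u = dist x₀ u₀ := by
      filter_upwards [hfub] with u hu
      obtain ⟨w, hw1, hw2⟩ := (hu.and hu₀).exists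
      have h8 : (1-θ) * dist x₀ u = (1-θ) * dist x₀ u₀ := by
        rw [hw1.2, hw2.2]
      exact mul_left_cancel₀ (by linarith : (1:ℝ)-θ ≠ 0) h8
    have hval : dist x₀ u₀ = L := by
      have h9 : M = ENNReal.ofReal (dist x₀ u₀) ^ p := by
        have hcg : ∀ᵐ y ∂μ, edist x₀ y ^ p = ENNReal.ofReal (dist x₀ u₀) ^ p := by
          filter_upwards [hFconst] with y hy
          rw [edist_dist, hy]
        rw [hM, lintegral_congr_ae hcg]
        simp [lintegral_const]
      have h10 : ENNReal.ofReal L ^ p = ENNReal.ofReal (dist x₀ u₀) ^ p := by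
        rw [hMeq]; exact h9
      have h11 := congrArg (fun w : ℝ≥0∞ => w ^ p⁻¹) h10
      simp only [ENNReal.rpow_rpow_inv hp0.ne'] at h11
      exact ((ENNReal.ofReal_eq_ofReal_iff hLpos.le dist_nonneg).1 h11).symm
    have hg1 : (1 - θ)/θ * L = 1 := by
      rw [e1θ, hθ]
      field_simp
    have hGconst1 : ∀ᵐ w ∂ν, dist x₀ w = 1 := by
      filter_upwards [hu₀] with w hw
      have h12 : dist x₀ w = (1-θ)/θ * dist x₀ u₀ := by
        field_simp
        linarith [hw.2]
      rw [h12, hval, hg1]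
    have hF2 : ∀ᵐ z ∂(μ.prod ν), dist x₀ z.1 = L := by
      have hms : MeasurableSet {u : E | ¬ dist x₀ u = L} :=
        (measurable_const.dist measurable_id) (measurableSet_singleton L).compl
      rw [ae_iff]
      have h13 : {z : E × E | ¬ dist x₀ z.1 = L}
          = Prod.fst ⁻¹' {u : E | ¬ dist x₀ u = L} := rfl
      rw [h13, ← Measure.map_apply measurable_fst hms, hmemprod.1]
      exact ae_iff.1 (hFconst.mono fun u hu => by rw [hu, hval])
    have hG2 : ∀ᵐ z ∂(μ.prod ν), dist x₀ z.2 = 1 := by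
      have hms : MeasurableSet {u : E | ¬ dist x₀ u = 1} :=
        (measurable_const.dist measurable_id) (measurableSet_singleton 1).compl
      rw [ae_iff]
      have h13 : {z : E × E | ¬ dist x₀ z.2 = 1}
          = Prod.snd ⁻¹' {u : E | ¬ dist x₀ u = 1} := rfl
      rw [h13, ← Measure.map_apply measurable_snd hms, hmemprod.2]
      exact ae_iff.1 hGconst1
    have hkey : ∀ᵐ z ∂(μ.prod ν), z.1 - x₀ = L • (x₀ - z.2) := by
      filter_upwards [hae_real, hF2, hG2] with z hz hF hG
      have hnF : ‖z.1 - x₀‖ = L := by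
        rw [← dist_eq_norm, dist_comm]
        exact hF
      have hnG : ‖x₀ - z.2‖ = 1 := by
        rw [← dist_eq_norm]
        exact hG
      have ha : ‖(z.1 - x₀) + (x₀ - z.2)‖ = ‖z.1 - x₀‖ + ‖x₀ - z.2‖ := by
        rw [show z.1 - x₀ + (x₀ - z.2) = z.1 - z.2 by abel, ← dist_eq_norm,
          show ‖z.1 - x₀‖ = dist x₀ z.1 by rw [← dist_eq_norm, dist_comm],
          show ‖x₀ - z.2‖ = dist x₀ z.2 by rw [← dist_eq_norm]]
        exact hz.1
      have hinner : ⟪z.1 - x₀, x₀ - z.2⟫ = ‖z.1 - x₀‖ * ‖x₀ - z.2‖ := by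
        have hsq := norm_add_sq_real (z.1 - x₀) (x₀ - z.2)
        rw [ha] at hsq
        have hexp : (‖z.1 - x₀‖ + ‖x₀ - z.2‖)^2
            = ‖z.1 - x₀‖^2 + 2*(‖z.1 - x₀‖*‖x₀ - z.2‖) + ‖x₀ - z.2‖^2 := by ring
        rw [hexp] at hsq
        linarith
      have h14 := inner_eq_norm_mul_iff_real.1 hinner
      rw [hnF, hnG, one_smul] at h14
      exact h14
    have hfub2 := Measure.ae_ae_of_ae_prod hkey
    obtain ⟨u₁, hu₁⟩ := hfub2.exists
    have hconst : ∀ᵐ u ∂μ, u = u₁ := by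
      filter_upwards [hfub2] with u hu
      obtain ⟨w, hw1, hw2⟩ := (hu.and hu₁).exists
      have h15 : u - x₀ = u₁ - x₀ := by rw [hw1, hw2]
      exact sub_left_inj.1 h15
    exact ⟨u₁, eq_dirac_of_ae_eq hconst⟩

end WpProof


/-- for `1 < p < ∞` and `dim E ≥ 2`, a measure `μ ∈ W_p(E)` is a Dirac measure
iff every geodesic segment issued from `μ` extends to a geodesic ray. -/
theorem dirac_iff_geodesics_extend
    {E : Type*} [NormedAddCommGroup E] [InnerProductSpace ℝ E] [CompleteSpace E]
    [SecondCountableTopology E] [MeasurableSpace E] [BorelSpace E]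
    (hdim : 2 ≤ Module.rank ℝ E)
    (p : ℝ) (hp1 : 1 < p)
    (μ : Measure E) (hμ : MemWp p μ) :
    (∃ x : E, μ = Measure.dirac x) ↔
      (∀ T : ℝ, 0 < T → ∀ γ : ℝ → Measure E,
        (∀ t ∈ Set.Icc (0:ℝ) T, MemWp p (γ t)) →
        γ 0 = μ →
        (∀ s ∈ Set.Icc (0:ℝ) T, ∀ t ∈ Set.Icc (0:ℝ) T,
          wassersteinDist p (γ s) (γ t) = ENNReal.ofReal |s - t|) →
        ∃ γ' : ℝ → Measure E,
          (∀ t : ℝ, 0 ≤ t → MemWp p (γ' t)) ∧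
          (∀ s : ℝ, 0 ≤ s → ∀ t : ℝ, 0 ≤ t →
            wassersteinDist p (γ' s) (γ' t) = ENNReal.ofReal |s - t|) ∧
          (∀ t ∈ Set.Icc (0:ℝ) T, γ' t = γ t)) := by
  constructor
  · rintro ⟨x, hx⟩ T hT γ hmem hγ0 hgeo
    exact WpProof.forward hp1 x hT γ hmem (by rw [hγ0, hx]) hgeo
  · intro H
    exact WpProof.backward hp1 μ hμ H
end
end

section
/- Let E be a separable real Hilbert space with dim E ≥ 2. For a measure μ ∈ W_1(E) the following are equivalent: (i) μ is a Dirac measure; (ii) for every ν ∈ W_1(E) with ν ≠ μ there exists η ∈ W_1(E) such that d_{W_1}(μ,ν) = d_{W_1}(ν,η) = (1/2)·d_{W_1}(μ,η). -/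
open MeasureTheory ENNReal Topology Filter
open scoped RealInnerProductSpace

noncomputable section

section Aux

variable {E : Type*} [NormedAddCommGroup E] [InnerProductSpace ℝ E]
    [SecondCountableTopology E] [MeasurableSpace E] [BorelSpace E]

lemma medist_right (x : E) : Measurable fun a : E => edist a x :=
  measurable_id.edist measurable_const

lemma medist_left (x : E) : Measurable fun a : E => edist x a :=
  measurable_const.edist measurable_id

lemma w1_def (μ ν : Measure E) :
    wassersteinDist 1 μ ν = ⨅ π ∈ {π : Measure (E × E) |
      π.map Prod.fst = μ ∧ π.map Prod.snd = ν}, ∫⁻ z, edist z.1 z.2 ∂π := by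
  have : ∀ π : Measure (E × E), ∫⁻ z, edist z.1 z.2 ^ (1:ℝ) ∂π = ∫⁻ z, edist z.1 z.2 ∂π :=
    fun π => lintegral_congr fun z => ENNReal.rpow_one _
  simp only [wassersteinDist, inv_one, min_self, ENNReal.rpow_one, this]

lemma coupling_cost_dirac_fst {x : E} {ν : Measure E} {π : Measure (E × E)}
    (h1 : π.map Prod.fst = Measure.dirac x) (h2 : π.map Prod.snd = ν) :
    ∫⁻ z, edist z.1 z.2 ∂π = ∫⁻ b, edist x b ∂ν := by
  have hae : ∀ᵐ z ∂π, z.1 = x := by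
    rw [ae_iff]
    have : {z : E × E | ¬ z.1 = x} = Prod.fst ⁻¹' ({x}ᶜ) := rfl
    rw [this, ← Measure.map_apply measurable_fst (MeasurableSet.singleton x).compl, h1]
    simp
  calc ∫⁻ z, edist z.1 z.2 ∂π = ∫⁻ z, edist x z.2 ∂π := by
        refine lintegral_congr_ae ?_
        filter_upwards [hae] with z hz
        rw [hz]
    _ = ∫⁻ b, edist x b ∂(π.map Prod.snd) :=
        (lintegral_map (medist_left _) measurable_snd).symm
    _ = ∫⁻ b, edist x b ∂ν := by rw [h2]

lemma coupling_cost_dirac_snd {x : E} {ν : Measure E} {π : Measure (E × E)}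
    (h1 : π.map Prod.fst = ν) (h2 : π.map Prod.snd = Measure.dirac x) :
    ∫⁻ z, edist z.1 z.2 ∂π = ∫⁻ a, edist a x ∂ν := by
  have hae : ∀ᵐ z ∂π, z.2 = x := by
    rw [ae_iff]
    have : {z : E × E | ¬ z.2 = x} = Prod.snd ⁻¹' ({x}ᶜ) := rfl
    rw [this, ← Measure.map_apply measurable_snd (MeasurableSet.singleton x).compl, h2]
    simp
  calc ∫⁻ z, edist z.1 z.2 ∂π = ∫⁻ z, edist z.1 x ∂π := by
        refine lintegral_congr_ae ?_
        filter_upwards [hae] with z hz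
        rw [hz]
    _ = ∫⁻ a, edist a x ∂(π.map Prod.fst) :=
        (lintegral_map (medist_right _) measurable_fst).symm
    _ = ∫⁻ a, edist a x ∂ν := by rw [h1]

lemma w1_dirac_left (x : E) (ν : Measure E) [IsProbabilityMeasure ν] :
    wassersteinDist 1 (Measure.dirac x) ν = ∫⁻ b, edist x b ∂ν := by
  rw [w1_def]
  refine le_antisymm ?_ ?_
  · have hmem : (Measure.dirac x).prod ν ∈ {π : Measure (E × E) |
        π.map Prod.fst = Measure.dirac x ∧ π.map Prod.snd = ν} := by
      constructor
      · rw [Measure.map_fst_prod]; simp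
      · rw [Measure.map_snd_prod]; simp
    exact (iInf₂_le _ hmem).trans_eq (coupling_cost_dirac_fst hmem.1 hmem.2)
  · exact le_iInf₂ fun π hπ => (coupling_cost_dirac_fst hπ.1 hπ.2).ge

lemma w1_dirac_right (x : E) (ν : Measure E) [IsProbabilityMeasure ν] :
    wassersteinDist 1 ν (Measure.dirac x) = ∫⁻ a, edist a x ∂ν := by
  rw [w1_def]
  refine le_antisymm ?_ ?_
  · have hmem : ν.prod (Measure.dirac x) ∈ {π : Measure (E × E) |
        π.map Prod.fst = ν ∧ π.map Prod.snd = Measure.dirac x} := by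
      constructor
      · rw [Measure.map_fst_prod]; simp
      · rw [Measure.map_snd_prod]; simp
    exact (iInf₂_le _ hmem).trans_eq (coupling_cost_dirac_snd hmem.1 hmem.2)
  · exact le_iInf₂ fun π hπ => (coupling_cost_dirac_snd hπ.1 hπ.2).ge

lemma moment_finite {ν : Measure E} (hν : MemWp 1 ν) (x : E) :
    ∫⁻ a, edist a x ∂ν ≠ ⊤ := by
  obtain ⟨hprob, x₀, hx₀⟩ := hν
  have hx₀' : ∫⁻ a, edist a x₀ ∂ν ≠ ⊤ := by
    rw [show (fun a : E => edist a x₀) = fun a => edist a x₀ ^ (1:ℝ) by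
      funext a; rw [ENNReal.rpow_one]]
    exact hx₀
  have hle : ∫⁻ a, edist a x ∂ν ≤ ∫⁻ a, (edist a x₀ + edist x₀ x) ∂ν :=
    lintegral_mono fun a => edist_triangle _ _ _
  rw [lintegral_add_right _ measurable_const, lintegral_const] at hle
  have : ν Set.univ = 1 := hprob.measure_univ
  rw [this, mul_one] at hle
  exact ne_top_of_le_ne_top (ENNReal.add_ne_top.2 ⟨hx₀', edist_ne_top _ _⟩) hle

lemma eq_dirac_of_compl_null {μ : Measure E} [IsProbabilityMeasure μ] {z : E}
    (h : μ ({z}ᶜ) = 0) : μ = Measure.dirac z := by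
  ext s hs
  rw [Measure.dirac_apply' _ hs]
  by_cases hz : z ∈ s
  · have h1 : μ sᶜ = 0 :=
      measure_mono_null (Set.compl_subset_compl.2 (Set.singleton_subset_iff.2 hz)) h
    rw [(prob_compl_eq_zero_iff hs).1 h1]
    simp [hz]
  · have : μ s = 0 := measure_mono_null (fun a ha (hmem : a ∈ ({z} : Set E)) => hz (hmem ▸ ha)) h
    rw [this]
    simp [hz]

lemma eq_dirac_of_lintegral_zero {μ : Measure E} [IsProbabilityMeasure μ] {y : E}
    (h : ∫⁻ a, edist a y ∂μ = 0) : μ = Measure.dirac y := by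
  have h1 : ∀ᵐ a ∂μ, a = y := by
    filter_upwards [(lintegral_eq_zero_iff (medist_right _)).1 h] with a ha
    simpa [edist_eq_zero] using ha
  exact eq_dirac_of_compl_null (ae_iff.1 h1)

/-- Two distinct lines intersect in at most one point. -/
lemma line_inter_subsingleton {y₁ v₁ y₂ v₂ : E}
    (hy₂ : y₂ ∉ {a : E | ∃ t : ℝ, a = y₁ + t • v₁}) :
    Set.Subsingleton ({a : E | ∃ t : ℝ, a = y₁ + t • v₁} ∩
      {a : E | ∃ t : ℝ, a = y₂ + t • v₂}) := by
  rintro p ⟨⟨s, hp1⟩, ⟨s', hp2⟩⟩ q ⟨⟨t, hq1⟩, ⟨t', hq2⟩⟩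
  by_contra hpq
  have hst' : s' ≠ t' := by
    rintro rfl
    exact hpq (hp2.trans hq2.symm)
  have hdiff : (s - t) • v₁ = (s' - t') • v₂ := by
    have h1 : p - q = (s - t) • v₁ := by rw [hp1, hq1, sub_smul]; abel
    have h2 : p - q = (s' - t') • v₂ := by rw [hp2, hq2, sub_smul]; abel
    rw [← h1, h2]
  have hv₂ : v₂ = ((s - t) / (s' - t')) • v₁ := by
    have h := congrArg (fun u => ((s' - t')⁻¹ : ℝ) • u) hdiff
    simp only [smul_smul] at h
    rw [inv_mul_cancel₀ (sub_ne_zero.2 hst'), one_smul] at h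
    rw [← h, div_eq_inv_mul, mul_comm]
  exact hy₂ ⟨s - s' * ((s - t) / (s' - t')), by
    have : y₂ = p - s' • v₂ := by rw [hp2]; abel
    rw [this, hp1, hv₂]
    module⟩

end Aux

/-- for `dim E ≥ 2`, a measure `μ ∈ W₁(E)` is a Dirac measure iff every other
measure `ν` can be "reflected through" `ν` in the metric sense:
`d(μ,ν) = d(ν,η) = d(μ,η)/2` for some `η`. -/
theorem dirac_iff_metric_reflection_W1
    {E : Type*} [NormedAddCommGroup E] [InnerProductSpace ℝ E] [CompleteSpace E]
    [SecondCountableTopology E] [MeasurableSpace E] [BorelSpace E]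
    (hdim : 2 ≤ Module.rank ℝ E)
    (μ : Measure E) (hμ : MemWp 1 μ) :
    (∃ x : E, μ = Measure.dirac x) ↔
      (∀ ν : Measure E, MemWp 1 ν → ν ≠ μ →
        ∃ η : Measure E, MemWp 1 η ∧
          wassersteinDist 1 μ ν = wassersteinDist 1 ν η ∧
          wassersteinDist 1 ν η = wassersteinDist 1 μ η / 2) := by
  constructor
  · -- forward direction
    rintro ⟨x, rfl⟩ ν hν hne
    have hprob : IsProbabilityMeasure ν := hν.1
    set T : E → E := fun a => a + a - x with hT_def
    have hT : Measurable T :=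
      ((continuous_id.add continuous_id).sub continuous_const).measurable
    have hTdist : ∀ a : E, edist (T a) x = 2 * edist a x := by
      intro a
      have h1 : T a - x = (a - x) + (a - x) := by simp only [hT_def]; abel
      rw [edist_eq_enorm_sub, h1, ← two_smul ℝ (a - x), enorm_smul,
        edist_eq_enorm_sub, Real.enorm_of_nonneg (by norm_num : (0:ℝ) ≤ 2)]
      push_cast
      norm_num
    have hTdist' : ∀ a : E, edist a (T a) = edist a x := by
      intro a
      have h1 : a - T a = x - a := by simp only [hT_def]; abel
      rw [edist_eq_enorm_sub, h1, ← edist_eq_enorm_sub, edist_comm]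
    set D : ℝ≥0∞ := ∫⁻ a, edist a x ∂ν with hD_def
    have hDfin : D ≠ ⊤ := moment_finite hν x
    set η : Measure E := ν.map T with hη_def
    have hηprob : IsProbabilityMeasure η := Measure.isProbabilityMeasure_map hT.aemeasurable
    have hηmom : ∫⁻ c, edist c x ∂η = 2 * D := by
      rw [hη_def, lintegral_map (medist_right _) hT]
      calc ∫⁻ a, edist (T a) x ∂ν = ∫⁻ a, 2 * edist a x ∂ν := lintegral_congr fun a => hTdist a
        _ = 2 * D := lintegral_const_mul 2 (medist_right _)
    have hηW : MemWp 1 η := by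
      refine ⟨hηprob, x, ?_⟩
      rw [show (fun c : E => edist c x ^ (1:ℝ)) = fun c => edist c x by
        funext c; rw [ENNReal.rpow_one]]
      rw [hηmom]
      exact ENNReal.mul_ne_top (by norm_num) hDfin
    -- d(δ_x, ν) = D
    have hd1 : wassersteinDist 1 (Measure.dirac x) ν = D := by
      rw [w1_dirac_left]
      exact lintegral_congr fun b => edist_comm x b
    -- d(δ_x, η) = 2D
    have hd2 : wassersteinDist 1 (Measure.dirac x) η = 2 * D := by
      rw [w1_dirac_left, ← hηmom]
      exact lintegral_congr fun b => edist_comm x b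
    -- d(ν, η) = D
    have hd3 : wassersteinDist 1 ν η = D := by
      rw [w1_def]
      refine le_antisymm ?_ ?_
      · have hpair : Measurable fun a : E => (a, T a) := measurable_id.prodMk hT
        have hmem : ν.map (fun a => (a, T a)) ∈ {π : Measure (E × E) |
            π.map Prod.fst = ν ∧ π.map Prod.snd = η} := by
          constructor
          · rw [Measure.map_map measurable_fst hpair]
            exact Measure.map_id
          · rw [Measure.map_map measurable_snd hpair]
            rfl
        refine (iInf₂_le _ hmem).trans ?_
        rw [lintegral_map (measurable_fst.edist measurable_snd) hpair]
        exact (lintegral_congr fun a => hTdist' a).le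
      · refine le_iInf₂ fun π hπ => ?_
        have hf : ∫⁻ z : E × E, edist z.2 x ∂π = 2 * D := by
          rw [← lintegral_map (medist_right _) measurable_snd, hπ.2, hηmom]
        have hg : ∫⁻ z : E × E, edist z.1 x ∂π = D := by
          rw [← lintegral_map (medist_right _) measurable_fst, hπ.1]
        have key : D ≤ ∫⁻ z : E × E, (edist z.2 x - edist z.1 x) ∂π := by
          have := lintegral_sub_le (fun z : E × E => edist z.1 x)
            (fun z : E × E => edist z.2 x) (measurable_fst.edist measurable_const) (μ := π)
          rw [hf, hg] at this
          refine le_trans ?_ this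
          rw [two_mul, ENNReal.add_sub_cancel_right hDfin]
        refine key.trans (lintegral_mono fun z => ?_)
        rw [tsub_le_iff_right]
        calc edist z.2 x ≤ edist z.2 z.1 + edist z.1 x := edist_triangle _ _ _
          _ = edist z.1 z.2 + edist z.1 x := by rw [edist_comm z.2 z.1]
    refine ⟨η, hηW, ?_, ?_⟩
    · rw [hd1, hd3]
    · rw [hd3, hd2, mul_comm, mul_div_assoc, ENNReal.div_self (by norm_num) (by norm_num),
        mul_one]
  · -- backward direction
    intro h
    by_contra hnd
    have hprob : IsProbabilityMeasure μ := hμ.1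
    have key : ∀ y : E, ∃ c : E, c ≠ y ∧
        μ ({a : E | ∃ t : ℝ, a = y + t • (y - c)}ᶜ) = 0 := by
      intro y
      have hνW : MemWp 1 (Measure.dirac y) := by
        refine ⟨inferInstance, y, ?_⟩
        rw [lintegral_dirac' _ ((medist_right _).pow_const _)]
        simp
      have hνne : Measure.dirac y ≠ μ := fun hcon => hnd ⟨y, hcon.symm⟩
      obtain ⟨η, hηW, e1, e2⟩ := h (Measure.dirac y) hνW hνne
      have hηprob : IsProbabilityMeasure η := hηW.1
      set D : ℝ≥0∞ := ∫⁻ a, edist a y ∂μ with hD_def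
      have hDfin : D ≠ ⊤ := moment_finite hμ y
      have hD0 : D ≠ 0 := fun hcon => hnd ⟨y, eq_dirac_of_lintegral_zero hcon⟩
      have hd1 : wassersteinDist 1 μ (Measure.dirac y) = D := w1_dirac_right y μ
      have hd3 : wassersteinDist 1 (Measure.dirac y) η = ∫⁻ c, edist y c ∂η :=
        w1_dirac_left y η
      have hηmom : ∫⁻ c, edist y c ∂η = D := by rw [← hd3, ← e1, hd1]
      have hd2 : wassersteinDist 1 μ η = 2 * D := by
        have : wassersteinDist 1 μ η = wassersteinDist 1 μ η / 2 * 2 :=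
          (ENNReal.div_mul_cancel (by norm_num) (by norm_num)).symm
        rw [this, ← e2, hd3, hηmom, mul_comm]
      -- the product coupling (swapped) of μ and η
      have hπmem : (η.prod μ).map Prod.swap ∈ {π : Measure (E × E) |
          π.map Prod.fst = μ ∧ π.map Prod.snd = η} := by
        constructor
        · rw [Measure.map_map measurable_fst measurable_swap]
          have : (Prod.fst ∘ Prod.swap : E × E → E) = Prod.snd := rfl
          rw [this, Measure.map_snd_prod]
          simp
        · rw [Measure.map_map measurable_snd measurable_swap]
          have : (Prod.snd ∘ Prod.swap : E × E → E) = Prod.fst := rfl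
          rw [this, Measure.map_fst_prod]
          simp
      have hcost : ∫⁻ w : E × E, edist w.2 w.1 ∂(η.prod μ) ≥ 2 * D := by
        have h1 : wassersteinDist 1 μ η ≤ ∫⁻ z, edist z.1 z.2 ∂((η.prod μ).map Prod.swap) := by
          rw [w1_def]; exact iInf₂_le _ hπmem
        rw [hd2, lintegral_map (measurable_fst.edist measurable_snd) measurable_swap] at h1
        exact h1
      have hsum : ∫⁻ w : E × E, (edist w.2 y + edist y w.1) ∂(η.prod μ) = 2 * D := by
        rw [lintegral_add_left (measurable_snd.edist measurable_const)]
        have h1 : ∫⁻ w : E × E, edist w.2 y ∂(η.prod μ) = D := by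
          rw [← lintegral_map (medist_right _) measurable_snd,
            Measure.map_snd_prod]
          simp [hD_def]
        have h2 : ∫⁻ w : E × E, edist y w.1 ∂(η.prod μ) = D := by
          rw [← lintegral_map (medist_left _) measurable_fst,
            Measure.map_fst_prod]
          simp [hηmom]
        rw [h1, h2, two_mul]
      have hle : ∀ w : E × E, edist w.2 w.1 ≤ edist w.2 y + edist y w.1 :=
        fun w => edist_triangle _ _ _
      have hcost_le : ∫⁻ w : E × E, edist w.2 w.1 ∂(η.prod μ) ≤ 2 * D := by
        rw [← hsum]; exact lintegral_mono hle
      have hcost_eq : ∫⁻ w : E × E, edist w.2 w.1 ∂(η.prod μ) = 2 * D :=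
        le_antisymm hcost_le hcost
      have h2Dfin : (2 : ℝ≥0∞) * D ≠ ⊤ := ENNReal.mul_ne_top (by norm_num) hDfin
      have hsub : ∫⁻ w : E × E, ((edist w.2 y + edist y w.1) - edist w.2 w.1) ∂(η.prod μ) = 0 := by
        rw [lintegral_sub (measurable_snd.edist measurable_fst)
          (hcost_eq ▸ h2Dfin) (Eventually.of_forall hle), hsum, hcost_eq, tsub_self]
      have haeeq : ∀ᵐ w ∂(η.prod μ), edist w.2 w.1 = edist w.2 y + edist y w.1 := by
        have := (lintegral_eq_zero_iff
          (((measurable_snd.edist measurable_const).add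
            (measurable_const.edist measurable_fst)).sub
            (measurable_snd.edist measurable_fst))).1 hsub
        filter_upwards [this] with w hw
        exact le_antisymm (hle w) (tsub_eq_zero_iff_le.1 hw)
      have haeae : ∀ᵐ c ∂η, ∀ᵐ a ∂μ, edist a c = edist a y + edist y c :=
        Measure.ae_ae_of_ae_prod haeeq
      -- find c ≠ y in the a.e. set
      have hηy : η ({y}ᶜ) ≠ 0 := by
        intro hcon
        apply hD0
        rw [← hηmom]
        rw [lintegral_eq_zero_iff (medist_left _)]
        rw [Filter.EventuallyEq, ae_iff]
        refine measure_mono_null ?_ hcon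
        intro c hc
        simp only [Set.mem_setOf_eq] at hc
        simp only [Set.mem_compl_iff, Set.mem_singleton_iff]
        intro hcy
        exact hc (by simp [hcy])
      obtain ⟨c, hc⟩ : ∃ c : E, c ∈ ({y}ᶜ : Set E) \
          {c | ¬ ∀ᵐ a ∂μ, edist a c = edist a y + edist y c} := by
        refine nonempty_of_measure_ne_zero (μ := η) ?_
        rw [measure_diff_null (ae_iff.1 haeae)]
        exact hηy
      obtain ⟨hcy, hcae⟩ := hc
      simp only [Set.mem_compl_iff, Set.mem_singleton_iff] at hcy
      simp only [Set.mem_setOf_eq, not_not] at hcae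
      refine ⟨c, hcy, ae_iff.1 ?_⟩
      filter_upwards [hcae] with a ha
      -- from edist equality to membership in the line
      have hdist : ‖a - y + (y - c)‖ = ‖a - y‖ + ‖y - c‖ := by
        have h1 : dist a c = dist a y + dist y c := by
          have := congrArg ENNReal.toReal ha
          rw [ENNReal.toReal_add (edist_ne_top _ _) (edist_ne_top _ _)] at this
          simpa [dist_edist] using this
        have h2 : a - y + (y - c) = a - c := by abel
        rw [h2, ← dist_eq_norm, ← dist_eq_norm, ← dist_eq_norm, h1]
      have hray : SameRay ℝ (a - y) (y - c) := sameRay_iff_norm_add.mpr hdist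
      have hvne : y - c ≠ 0 := sub_ne_zero.2 (Ne.symm hcy)
      obtain ⟨r, _, hr⟩ := hray.symm.exists_nonneg_left hvne
      exact ⟨r, by rw [hr]; abel⟩
    -- now use two different base points
    obtain ⟨c₁, hc₁, hS₁⟩ := key 0
    set S₁ : Set E := {a : E | ∃ t : ℝ, a = 0 + t • (0 - c₁)} with hS₁def
    -- there is a point off the line S₁
    have hv₁ : (0 : E) - c₁ ≠ 0 := sub_ne_zero.2 (Ne.symm hc₁)
    obtain ⟨y₂, hy₂⟩ : ∃ y₂ : E, y₂ ∉ S₁ := by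
      by_contra hcon
      push_neg at hcon
      have hspan : Submodule.span ℝ ({(0:E) - c₁} : Set E) = ⊤ := by
        rw [Submodule.eq_top_iff']
        intro u
        obtain ⟨t, ht⟩ := hcon u
        rw [ht, zero_add]
        exact Submodule.smul_mem _ _ (Submodule.mem_span_singleton_self _)
      have h1 : Module.rank ℝ E ≤ 1 := by
        have h2 := rank_span_le (R := ℝ) ({(0:E) - c₁} : Set E)
        rw [hspan] at h2
        rw [← rank_top ℝ E]
        simpa using h2
      have := hdim.trans h1
      norm_num at this
    obtain ⟨c₂, hc₂, hS₂⟩ := key y₂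
    set S₂ : Set E := {a : E | ∃ t : ℝ, a = y₂ + t • (y₂ - c₂)} with hS₂def
    have hsub : Set.Subsingleton (S₁ ∩ S₂) := line_inter_subsingleton hy₂
    have hinter : μ (S₁ ∩ S₂) = 1 := by
      have hc : μ ((S₁ ∩ S₂)ᶜ) = 0 := by
        rw [Set.compl_inter]
        exact measure_union_null hS₁ hS₂
      have h1 : (1 : ℝ≥0∞) ≤ μ (S₁ ∩ S₂) := by
        have := measure_union_le (μ := μ) (S₁ ∩ S₂) ((S₁ ∩ S₂)ᶜ)
        rw [Set.union_compl_self, hc, add_zero, measure_univ] at this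
        exact this
      exact le_antisymm prob_le_one h1
    obtain ⟨z, hz⟩ : (S₁ ∩ S₂).Nonempty :=
      nonempty_of_measure_ne_zero (by rw [hinter]; norm_num)
    have hsubz : S₁ ∩ S₂ ⊆ {z} := fun w hw => hsub hw hz
    have hzc : μ ({z}ᶜ) = 0 := by
      have h1 : (1:ℝ≥0∞) ≤ μ {z} := hinter ▸ measure_mono hsubz
      exact (prob_compl_eq_zero_iff (MeasurableSet.singleton z)).2
        (le_antisymm prob_le_one h1)
    exact hnd ⟨z, eq_dirac_of_compl_null hzc⟩
end
end

section
/- Let m ∈ ℕ, m ≥ 1, let λ_1, …, λ_m be real numbers not all zero, and let a_1, …, a_m be pairwise distinct positive real numbers. Then the function ℝ → ℝ, t ↦ Σ_{ℓ=1}^{m} λ_ℓ · a_ℓ^t, has at most m−1 real zeros. -/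
open Real Finset in
private theorem exp_sum_aux : ∀ (n : ℕ) (c a : Fin (n+1) → ℝ), (∃ ℓ, c ℓ ≠ 0) →
    (∀ ℓ, 0 < a ℓ) → Function.Injective a →
    {t : ℝ | ∑ ℓ, c ℓ * a ℓ ^ t = 0}.encard ≤ (n : ℕ∞) := by
  intro n
  induction n with
  | zero =>
    intro c a hc ha hinj
    obtain ⟨ℓ, hℓ⟩ := hc
    have hℓ0 : c 0 ≠ 0 := by rwa [Subsingleton.elim (0 : Fin 1) ℓ]
    have : {t : ℝ | ∑ ℓ, c ℓ * a ℓ ^ t = 0} = ∅ := by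
      ext t
      simp only [Set.mem_setOf_eq, Set.mem_empty_iff_false, iff_false,
        Fin.sum_univ_succ, Fin.sum_univ_zero, add_zero]
      exact mul_ne_zero hℓ0 (ne_of_gt (rpow_pos_of_pos (ha 0) t))
    rw [this, Set.encard_empty]
    exact le_refl _
  | succ n IH =>
    intro c a hc ha hinj
    set L : Fin (n+2) := Fin.last (n+1) with hL
    set b : Fin (n+2) → ℝ := fun ℓ => a ℓ / a L with hb
    have hbpos : ∀ ℓ, 0 < b ℓ := fun ℓ => div_pos (ha ℓ) (ha L)
    have hbinj : Function.Injective b := by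
      intro i j h
      apply hinj
      have h' : a i / a L = a j / a L := h
      rw [div_eq_div_iff (ne_of_gt (ha L)) (ne_of_gt (ha L))] at h'
      exact mul_right_cancel₀ (ne_of_gt (ha L)) h'
    have hbL : b L = 1 := div_self (ne_of_gt (ha L))
    -- zero sets of the a-sum and b-sum coincide
    have hset : {t : ℝ | ∑ ℓ, c ℓ * a ℓ ^ t = 0} = {t : ℝ | ∑ ℓ, c ℓ * b ℓ ^ t = 0} := by
      ext t
      simp only [Set.mem_setOf_eq]
      have hLpos : (0:ℝ) < a L ^ t := rpow_pos_of_pos (ha L) t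
      have hsum : ∑ ℓ, c ℓ * b ℓ ^ t = (∑ ℓ, c ℓ * a ℓ ^ t) / (a L ^ t) := by
        rw [Finset.sum_div]
        refine Finset.sum_congr rfl fun ℓ _ => ?_
        rw [hb, Real.div_rpow (ha ℓ).le (ha L).le, mul_div_assoc]
      rw [hsum, div_eq_zero_iff]
      constructor
      · intro h; exact Or.inl h
      · rintro (h | h)
        · exact h
        · exact absurd h (ne_of_gt hLpos)
    rw [hset]
    set g : ℝ → ℝ := fun t => ∑ ℓ, c ℓ * b ℓ ^ t with hgdef
    set d : Fin (n+1) → ℝ := fun i => c i.castSucc * Real.log (b i.castSucc) with hd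
    set e : Fin (n+1) → ℝ := fun i => b i.castSucc with he
    have hg : ∀ t, HasDerivAt g (∑ i, d i * e i ^ t) t := by
      intro t
      have h1 : HasDerivAt g (∑ ℓ, (c ℓ * Real.log (b ℓ)) * b ℓ ^ t) t := by
        apply HasDerivAt.fun_sum
        intro ℓ _
        have := ((Real.hasStrictDerivAt_const_rpow (hbpos ℓ) t).hasDerivAt).const_mul (c ℓ)
        convert this using 1
        · rfl
        ring
      have h2 : ∑ ℓ, (c ℓ * Real.log (b ℓ)) * b ℓ ^ t = ∑ i, d i * e i ^ t := by
        rw [Fin.sum_univ_castSucc]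
        simp [hbL, hd, he, ← hL]
      rwa [h2] at h1
    by_cases hC : ∀ i : Fin (n+1), c i.castSucc = 0
    · -- all but last coefficients vanish: g is a nonzero constant
      have hcL : c L ≠ 0 := by
        obtain ⟨ℓ, hℓ⟩ := hc
        rcases Fin.eq_castSucc_or_eq_last ℓ with ⟨i, rfl⟩ | rfl
        · exact absurd (hC i) hℓ
        · exact hℓ
      have : {t : ℝ | ∑ ℓ, c ℓ * b ℓ ^ t = 0} = ∅ := by
        ext t
        simp only [Set.mem_setOf_eq, Set.mem_empty_iff_false, iff_false]
        rw [Fin.sum_univ_castSucc]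
        simp only [hC, zero_mul, Finset.sum_const_zero, zero_add]
        rw [hbL, Real.one_rpow, mul_one]
        exact hcL
      simp [this]
    · push_neg at hC
      obtain ⟨i0, hi0⟩ := hC
      have hd0 : ∃ i, d i ≠ 0 := by
        refine ⟨i0, ?_⟩
        apply mul_ne_zero hi0
        have hne1 : b i0.castSucc ≠ 1 := by
          rw [← hbL]
          intro h
          exact absurd (hbinj h) (ne_of_lt (Fin.castSucc_lt_last i0))
        intro h
        rcases Real.log_eq_zero.mp h with h | h | h
        · exact absurd h (ne_of_gt (hbpos _))
        · exact hne1 h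
        · linarith [hbpos i0.castSucc]
      have hIH := IH d e hd0 (fun i => hbpos _) (fun i j h => Fin.castSucc_injective _ (hbinj h))
      by_contra hcon
      push_neg at hcon
      have hle : ((n+2 : ℕ) : ℕ∞) ≤ {t : ℝ | ∑ ℓ, c ℓ * b ℓ ^ t = 0}.encard := by
        have h2 := Order.add_one_le_of_lt hcon
        refine le_trans (le_of_eq ?_) h2
        push_cast
        ring
      obtain ⟨T, hTsub, hTcard⟩ := Set.exists_subset_encard_eq hle
      have hTfin : T.Finite := Set.finite_of_encard_eq_coe hTcard
      have hFcard : hTfin.toFinset.card = n + 2 := by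
        have := hTfin.encard_eq_coe_toFinset_card
        rw [hTcard] at this
        exact_mod_cast this.symm
      set X : Fin (n+2) → ℝ := fun i => (hTfin.toFinset.orderIsoOfFin hFcard i : ℝ) with hX
      have hXmono : StrictMono X := fun i j h => by
        exact_mod_cast (hTfin.toFinset.orderIsoOfFin hFcard).lt_iff_lt.mpr h
      have hXzero : ∀ i, g (X i) = 0 := by
        intro i
        have : X i ∈ T := by
          have := (hTfin.toFinset.orderIsoOfFin hFcard i).2
          rwa [Set.Finite.mem_toFinset] at this
        exact hTsub this
      have hgcont : Continuous g := by
        have : Differentiable ℝ g := fun t => (hg t).differentiableAt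
        exact this.continuous
      have hroll : ∀ i : Fin (n+1), ∃ y ∈ Set.Ioo (X i.castSucc) (X i.succ),
          ∑ j, d j * e j ^ y = 0 := by
        intro i
        have hlt : X i.castSucc < X i.succ := hXmono Fin.castSucc_lt_succ
        obtain ⟨y, hy, hy0⟩ := exists_deriv_eq_zero hlt hgcont.continuousOn
          (by rw [hXzero, hXzero])
        refine ⟨y, hy, ?_⟩
        rw [← (hg y).deriv]
        exact hy0
      choose y hy1 hy2 using hroll
      have hymono : StrictMono y := by
        intro i j hij
        have h1 : y i < X i.succ := (hy1 i).2
        have h2 : X j.castSucc < y j := (hy1 j).1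
        have h3 : X i.succ ≤ X j.castSucc := by
          apply hXmono.monotone
          rw [Fin.le_def]
          simp only [Fin.val_succ, Fin.coe_castSucc]
          omega
        linarith
      have hrange : Set.range y ⊆ {t : ℝ | ∑ j, d j * e j ^ t = 0} := by
        rintro _ ⟨i, rfl⟩
        exact hy2 i
      have hcard : ((n+1 : ℕ) : ℕ∞) ≤ {t : ℝ | ∑ j, d j * e j ^ t = 0}.encard := by
        calc ((n+1 : ℕ) : ℕ∞) = (Set.range y).encard := by
              rw [← Set.image_univ, Set.InjOn.encard_image (hymono.injective.injOn)]
              simp [Set.encard_univ]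
          _ ≤ _ := Set.encard_mono hrange
      have : ((n+1 : ℕ) : ℕ∞) ≤ (n : ℕ∞) := le_trans hcard hIH
      have : (n+1 : ℕ) ≤ n := by exact_mod_cast this
      omega

/-- a nontrivial real linear combination of `m` distinct exponential functions
`t ↦ a_ℓ^t` (with `a_ℓ > 0` pairwise distinct) has at most `m - 1` real zeros. -/
theorem exponential_sum_zeros_le
    (m : ℕ) (hm : 1 ≤ m) (c a : Fin m → ℝ)
    (hc : ∃ ℓ, c ℓ ≠ 0) (ha : ∀ ℓ, 0 < a ℓ) (hainj : Function.Injective a) :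
    {t : ℝ | ∑ ℓ, c ℓ * a ℓ ^ t = 0}.encard ≤ ((m - 1 : ℕ) : ℕ∞) := by
  obtain ⟨n, rfl⟩ : ∃ n, m = n + 1 := ⟨m - 1, (Nat.succ_pred_eq_of_pos hm).symm⟩
  simpa using exp_sum_aux n c a hc ha hainj
end

section
/- Let 0 < p < ∞ with p not an even integer and let k = ⌈p/2⌉. Then Σ_{j=0}^{k−1} C(2k,j)·(−1)^j·(k−j)^p ≠ 0, where C(2k,j) denotes the binomial coefficient. -/
open Finset Real Polynomial

private lemma term_deriv (a c t : ℝ) :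
    HasDerivAt (fun s : ℝ => c * Real.exp (a * s)) (c * a * Real.exp (a * t)) t := by
  have h1 : HasDerivAt (fun s : ℝ => a * s) a t := by
    simpa using (hasDerivAt_id t).const_mul a
  have h2 := (h1.exp).const_mul c
  convert h2 using 1
  · rfl
  · rfl
  · ring

/-- A real exponential sum with `n+1` (nonzero) terms cannot have `n+1` distinct zeros. -/
private lemma expsum_no_zeros :
    ∀ (n : ℕ) (c μ : ℕ → ℝ), (∀ i, i < n + 1 → c i ≠ 0) →
    (∀ i j, i < j → j < n + 1 → μ i < μ j) →
    ∀ x : Fin (n + 1) → ℝ, StrictMono x →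
    (∀ i, ∑ j ∈ Finset.range (n + 1), c j * Real.exp (μ j * x i) = 0) → False := by
  intro n
  induction n with
  | zero =>
    intro c μ hc hμ x hx hz
    have h := hz 0
    rw [Finset.sum_range_one] at h
    rcases mul_eq_zero.mp h with h | h
    · exact hc 0 Nat.one_pos h
    · exact Real.exp_ne_zero _ h
  | succ n ih =>
    intro c μ hc hμ x hx hz
    set g : ℝ → ℝ := fun t => ∑ j ∈ Finset.range (n + 1 + 1), c j * Real.exp ((μ j - μ 0) * t)
      with hg
    set g' : ℝ → ℝ :=
      fun t => ∑ j ∈ Finset.range (n + 1 + 1), (c j * (μ j - μ 0)) * Real.exp ((μ j - μ 0) * t)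
      with hg'
    have hderiv : ∀ t, HasDerivAt g (g' t) t := by
      intro t
      exact HasDerivAt.fun_sum (fun j _hj => term_deriv (μ j - μ 0) (c j) t)
    have hgz : ∀ i, g (x i) = 0 := by
      intro i
      have h0 := hz i
      have he : g (x i) =
          Real.exp (-(μ 0 * x i)) * ∑ j ∈ Finset.range (n + 1 + 1), c j * Real.exp (μ j * x i) := by
        rw [Finset.mul_sum, hg]
        refine Finset.sum_congr rfl fun j _ => ?_
        have : (μ j - μ 0) * x i = μ j * x i + -(μ 0 * x i) := by ring
        rw [this, Real.exp_add]
        ring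
      rw [he, h0, mul_zero]
    have hR : ∀ i : Fin (n + 1), ∃ y, x i.castSucc < y ∧ y < x i.succ ∧ g' y = 0 := by
      intro i
      have hab : x i.castSucc < x i.succ := hx (Fin.castSucc_lt_succ (i := i))
      have hcont : ContinuousOn g (Set.Icc (x i.castSucc) (x i.succ)) := by
        apply Continuous.continuousOn
        apply continuous_finset_sum
        intro j _
        exact continuous_const.mul ((continuous_const.mul continuous_id).rexp)
      have heq : g (x i.castSucc) = g (x i.succ) := by rw [hgz, hgz]
      obtain ⟨y, hy, hy0⟩ :=
        exists_hasDerivAt_eq_zero hab hcont heq (fun t _ => hderiv t)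
      exact ⟨y, hy.1, hy.2, hy0⟩
    choose y hy1 hy2 hy0 using hR
    have hymono : StrictMono y := by
      intro i j hij
      have hij' : (i : ℕ) < (j : ℕ) := hij
      calc y i < x i.succ := hy2 i
        _ ≤ x j.castSucc := hx.monotone (by rw [Fin.le_def]; simpa using hij')
        _ < y j := hy1 j
    refine ih (fun j => c (j + 1) * (μ (j + 1) - μ 0)) (fun j => μ (j + 1) - μ 0) ?_ ?_ y hymono ?_
    · intro i hi
      have h1 : c (i + 1) ≠ 0 := hc (i + 1) (by omega)
      have h2 : μ 0 < μ (i + 1) := hμ 0 (i + 1) (by omega) (by omega)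
      exact mul_ne_zero h1 (by linarith)
    · intro i j hij hj
      have := hμ (i + 1) (j + 1) (by omega) (by omega)
      linarith
    · intro i
      have h0 := hy0 i
      rw [hg'] at h0
      dsimp only at h0 ⊢
      rw [Finset.sum_range_succ'
        (fun j => c j * (μ j - μ 0) * Real.exp ((μ j - μ 0) * y i)) (n + 1)] at h0
      simpa using h0

/-- The alternating binomial sum annihilates polynomials of degree `< n`. -/
private lemma altSum_poly :
    ∀ (n : ℕ) (Q : Polynomial ℝ), Q.degree < (n : WithBot ℕ) →
    ∑ j ∈ Finset.range (n + 1), (-1 : ℝ) ^ j * (n.choose j : ℝ) * Q.eval (j : ℝ) = 0 := by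
  intro n
  induction n with
  | zero =>
    intro Q hQ
    have hQ0 : Q = 0 := by
      by_contra h
      have := Polynomial.zero_le_degree_iff.mpr h
      exact absurd hQ (not_lt.mpr (by simpa using this))
    simp [hQ0]
  | succ n ih =>
    intro Q hQ
    by_cases hQ0 : Q = 0
    · simp [hQ0]
    · set R : Polynomial ℝ := Q - Q.comp (X + C 1) with hRdef
      have hlc : Q.leadingCoeff = (Q.comp (X + C 1)).leadingCoeff := by
        rw [Polynomial.leadingCoeff_comp
          (by rw [Polynomial.natDegree_X_add_C]; exact one_ne_zero)]
        rw [Polynomial.leadingCoeff_X_add_C, one_pow, mul_one]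
      have hcomp0 : Q.comp (X + C 1) ≠ 0 := by
        intro h
        have h2 : Q.leadingCoeff = 0 := by rw [hlc, h, Polynomial.leadingCoeff_zero]
        exact hQ0 (Polynomial.leadingCoeff_eq_zero.mp h2)
      have hnd : (Q.comp (X + C 1)).natDegree = Q.natDegree := by
        rw [Polynomial.natDegree_comp, Polynomial.natDegree_X_add_C, mul_one]
      have hdc : (Q.comp (X + C 1)).degree = Q.degree := by
        rw [Polynomial.degree_eq_natDegree hcomp0, Polynomial.degree_eq_natDegree hQ0, hnd]
      have hQle : Q.degree ≤ (n : WithBot ℕ) := by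
        have h3 : Q.natDegree < n + 1 := by
          have := (Polynomial.degree_eq_natDegree hQ0) ▸ hQ
          exact_mod_cast this
        rw [Polynomial.degree_eq_natDegree hQ0]
        exact_mod_cast Nat.lt_succ_iff.mp h3
      have hRdeg : R.degree < (n : WithBot ℕ) :=
        lt_of_lt_of_le (Polynomial.degree_sub_lt hdc.symm hQ0 hlc) hQle
      have hIH := ih R hRdeg
      have hReval : ∀ j : ℕ, R.eval (j : ℝ) = Q.eval (j : ℝ) - Q.eval ((j : ℝ) + 1) := by
        intro j
        simp [hRdef, Polynomial.eval_comp]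
      -- abbreviations
      set u : ℕ → ℝ := fun j => (-1 : ℝ) ^ j * (n.choose j : ℝ) * Q.eval (j : ℝ) with hu
      set v : ℕ → ℝ := fun j => (-1 : ℝ) ^ j * (n.choose j : ℝ) * Q.eval ((j : ℝ) + 1) with hv
      set z : ℕ → ℝ := fun j => (-1 : ℝ) ^ j * (n.choose (j + 1) : ℝ) * Q.eval ((j : ℝ) + 1)
        with hzdef
      have hB : ∑ j ∈ Finset.range (n + 1), (u j - v j) = 0 := by
        rw [← hIH]
        refine Finset.sum_congr rfl fun j _ => ?_
        rw [hReval j, hu, hv]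
        ring
      have hztop : z n = 0 := by
        simp [hzdef, Nat.choose_succ_self]
      have hzsum : ∑ j ∈ Finset.range (n + 1), z j = ∑ j ∈ Finset.range n, z j := by
        rw [Finset.sum_range_succ, hztop, add_zero]
      have huz : ∀ j : ℕ, u (j + 1) = -z j := by
        intro j
        rw [hu, hzdef]
        push_cast
        ring
      have husum : ∑ j ∈ Finset.range (n + 1), u j = (∑ j ∈ Finset.range n, u (j + 1)) + u 0 :=
        Finset.sum_range_succ' u n
      have hzsum2 : ∑ j ∈ Finset.range n, z j
          = -(∑ j ∈ Finset.range (n + 1), u j) + u 0 := by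
        have : ∑ j ∈ Finset.range n, z j = ∑ j ∈ Finset.range n, -(u (j + 1)) := by
          refine Finset.sum_congr rfl fun j _ => ?_
          rw [huz j]; ring
        rw [this, Finset.sum_neg_distrib, husum]
        ring
      -- now compute the goal
      have hmain : ∑ j ∈ Finset.range (n + 2), (-1 : ℝ) ^ j * ((n + 1).choose j : ℝ)
            * Q.eval (j : ℝ)
          = ∑ j ∈ Finset.range (n + 1), (u j - v j) := by
        rw [Finset.sum_range_succ'
          (fun j => (-1 : ℝ) ^ j * ((n + 1).choose j : ℝ) * Q.eval (j : ℝ)) (n + 1)]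
        have hterm : ∀ j : ℕ,
            (-1 : ℝ) ^ (j + 1) * ((n + 1).choose (j + 1) : ℝ) * Q.eval ((j : ℝ) + 1)
            = -v j - z j := by
          intro j
          rw [Nat.choose_succ_succ, hv, hzdef]
          push_cast
          ring
        have : ∑ j ∈ Finset.range (n + 1),
            (-1 : ℝ) ^ (j + 1) * ((n + 1).choose (j + 1) : ℝ) * Q.eval (((j : ℕ) + 1 : ℕ) : ℝ)
            = ∑ j ∈ Finset.range (n + 1), (-v j - z j) := by
          refine Finset.sum_congr rfl fun j _ => ?_
          push_cast
          exact hterm j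
        rw [show (fun j => (-1:ℝ) ^ (j+1) * ((n + 1).choose (j+1) : ℝ) * Q.eval ((j+1 : ℕ) : ℝ))
          = fun j => (-1:ℝ) ^ (j+1) * ((n + 1).choose (j+1) : ℝ) * Q.eval ((j+1 : ℕ) : ℝ) from rfl]
        rw [this]
        rw [Finset.sum_sub_distrib, Finset.sum_sub_distrib, Finset.sum_neg_distrib, hzsum, hzsum2]
        simp [hu]
        ring
      rw [show n + 1 + 1 = n + 2 from rfl, hmain, hB]

/-- The half alternating binomial sum vanishes at positive even exponents `2e < 2k`. -/
private lemma half_alt_even (k e : ℕ) (he : 0 < e) (hek : e < k) :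
    ∑ j ∈ Finset.range k, (-1 : ℝ) ^ j * ((2 * k).choose j : ℝ) * ((k : ℝ) - j) ^ (2 * e) = 0 := by
  set g : ℕ → ℝ := fun j => (-1 : ℝ) ^ j * ((2 * k).choose j : ℝ) * ((k : ℝ) - j) ^ (2 * e)
    with hgdef
  set P : Polynomial ℝ := (C (k : ℝ) - X) ^ (2 * e) with hPdef
  have hbase : (C (k : ℝ) - X) = -(X - C (k : ℝ)) := by ring
  have hP0 : P ≠ 0 := by
    rw [hPdef, hbase]
    exact pow_ne_zero _ (neg_ne_zero.mpr (Polynomial.X_sub_C_ne_zero _))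
  have hPnd : P.natDegree = 2 * e := by
    rw [hPdef, Polynomial.natDegree_pow, hbase, Polynomial.natDegree_neg,
      Polynomial.natDegree_X_sub_C, mul_one]
  have hPdeg : P.degree < ((2 * k : ℕ) : WithBot ℕ) := by
    rw [Polynomial.degree_eq_natDegree hP0, hPnd]
    exact_mod_cast (by omega : 2 * e < 2 * k)
  have hZ := altSum_poly (2 * k) P hPdeg
  have hZg : ∑ j ∈ Finset.range (2 * k + 1), g j = 0 := by
    rw [← hZ]
    refine Finset.sum_congr rfl fun j _ => ?_
    simp [hgdef, hPdef]
  have hsplit : ∑ j ∈ Finset.range (2 * k + 1), g j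
      = (∑ j ∈ Finset.range k, g j) + ∑ j ∈ Finset.Ico k (2 * k + 1), g j := by
    rw [Finset.range_eq_Ico, ← Finset.sum_Ico_consecutive _ (Nat.zero_le k) (by omega : k ≤ 2 * k + 1), ← Finset.range_eq_Ico]
  have h2 : ∑ j ∈ Finset.Ico k (2 * k + 1), g j = ∑ j ∈ Finset.range (k + 1), g (k + j) := by
    rw [Finset.sum_Ico_eq_sum_range, show 2 * k + 1 - k = k + 1 from by omega]
  have h3 : ∑ j ∈ Finset.range (k + 1), g (k + j)
      = (∑ j ∈ Finset.range k, g (k + (j + 1))) + g (k + 0) :=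
    Finset.sum_range_succ' (fun j => g (k + j)) k
  have hgk : g (k + 0) = 0 := by
    rw [hgdef]
    simp only [Nat.add_zero, sub_self]
    rw [zero_pow (by omega : 2 * e ≠ 0)]
    ring
  have hrefl : ∑ j ∈ Finset.range k, g (k + (j + 1)) = ∑ j ∈ Finset.range k, g j := by
    rw [← Finset.sum_range_reflect (fun j => g (k + (j + 1))) k]
    refine Finset.sum_congr rfl fun j hj => ?_
    have hj' : j < k := Finset.mem_range.mp hj
    rw [show k + (k - 1 - j + 1) = 2 * k - j from by omega]
    have hchoose : (2 * k).choose (2 * k - j) = (2 * k).choose j :=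
      Nat.choose_symm (by omega)
    have hsign : (-1 : ℝ) ^ (2 * k - j) = (-1) ^ j := by
      rw [show 2 * k - j = j + 2 * (k - j) from by omega, pow_add, pow_mul]
      simp
    have hcast : (k : ℝ) - ((2 * k - j : ℕ) : ℝ) = -((k : ℝ) - j) := by
      rw [Nat.cast_sub (by omega : j ≤ 2 * k)]
      push_cast
      ring
    rw [hgdef]
    dsimp only
    rw [hchoose, hsign, hcast, Even.neg_pow (even_two_mul e)]
  have := hZg
  rw [hsplit, h2, h3, hgk, hrefl] at this
  linarith

/-- for `0 < p < ∞` not an even integer and `k = ⌈p/2⌉`, the alternating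
binomial sum `∑_{j=0}^{k-1} C(2k,j) (-1)^j (k-j)^p` is nonzero. -/
theorem alternating_binomial_sum_ne_zero
    (p : ℝ) (hp : 0 < p) (hpne : ¬ ∃ n : ℤ, Even n ∧ p = n)
    (k : ℕ) (hk : k = ⌈p / 2⌉₊) :
    ∑ j ∈ Finset.range k, ((2 * k).choose j : ℝ) * (-1) ^ j * ((k : ℝ) - j) ^ p ≠ 0 := by
  have hk1 : 0 < k := by
    rw [hk]
    exact Nat.ceil_pos.mpr (by positivity)
  obtain ⟨m, rfl⟩ : ∃ m, k = m + 1 := ⟨k - 1, by omega⟩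
  have hgt : 2 * (m : ℝ) < p := by
    have h : (m : ℝ) < p / 2 := Nat.lt_ceil.mp (by omega)
    linarith
  have hple : p ≤ 2 * ((m : ℝ) + 1) := by
    have h := Nat.le_ceil (p / 2)
    rw [← hk] at h
    push_cast at h
    linarith
  have hne : p ≠ 2 * ((m : ℝ) + 1) := by
    intro h
    refine hpne ⟨2 * ((m : ℤ) + 1), ⟨(m : ℤ) + 1, by ring⟩, by push_cast [h]; ring⟩
  have hplt : p < 2 * ((m : ℝ) + 1) := lt_of_le_of_ne hple hne
  intro hS
  set c : ℕ → ℝ := fun i => (-1 : ℝ) ^ (m - i) * ((2 * (m + 1)).choose (m - i) : ℝ) with hc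
  set μ : ℕ → ℝ := fun i => Real.log ((i : ℝ) + 1) with hμ
  set x : Fin (m + 1) → ℝ := fun i => if (i : ℕ) = m then p else 2 * ((i : ℕ) + 1) with hx
  have hbridge : ∀ t : ℝ, ∑ j ∈ Finset.range (m + 1), c j * Real.exp (μ j * t)
      = ∑ j ∈ Finset.range (m + 1), (-1 : ℝ) ^ j * (((2 * (m + 1)).choose j : ℕ) : ℝ)
        * Real.exp (Real.log (((m : ℝ) + 1) - j) * t) := by
    intro t
    rw [← Finset.sum_range_reflect (fun j => c j * Real.exp (μ j * t)) (m + 1)]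
    refine Finset.sum_congr rfl fun j hj => ?_
    have hj' : j < m + 1 := Finset.mem_range.mp hj
    simp only [hc, hμ]
    rw [show m + 1 - 1 - j = m - j from by omega, show m - (m - j) = j from by omega]
    have h1 : ((m - j : ℕ) : ℝ) + 1 = ((m : ℝ) + 1) - j := by
      rw [Nat.cast_sub (by omega : j ≤ m)]
      ring
    rw [h1]
  have hzero : ∀ i : Fin (m + 1),
      ∑ j ∈ Finset.range (m + 1), c j * Real.exp (μ j * x i) = 0 := by
    intro i
    rw [hbridge (x i)]
    by_cases hcase : (i : ℕ) = m
    · have hxi : x i = p := by rw [hx]; simp [hcase]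
      rw [hxi, ← hS]
      refine Finset.sum_congr rfl fun j hj => ?_
      have hj' : j < m + 1 := Finset.mem_range.mp hj
      have hjm : (j : ℝ) ≤ m := by exact_mod_cast Nat.lt_succ_iff.mp hj'
      have hpos : (0 : ℝ) < ((m : ℝ) + 1) - j := by linarith
      have hcast : ((m : ℝ) + 1) - j = ((m + 1 : ℕ) : ℝ) - j := by push_cast; ring
      rw [Real.rpow_def_of_pos (by rw [← hcast]; exact hpos)]
      rw [← hcast]
      ring
    · have hlt : (i : ℕ) < m := by omega
      have hxi : x i = 2 * ((i : ℕ) + 1) := by rw [hx]; simp [hcase]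
      rw [hxi]
      have hhalf := half_alt_even (m + 1) ((i : ℕ) + 1) (by omega) (by omega)
      rw [← hhalf]
      refine Finset.sum_congr rfl fun j hj => ?_
      have hj' : j < m + 1 := Finset.mem_range.mp hj
      have hjm : (j : ℝ) ≤ m := by exact_mod_cast Nat.lt_succ_iff.mp hj'
      have hpos : (0 : ℝ) < ((m : ℝ) + 1) - j := by linarith
      have hcast2 : (2 * ((i : ℕ) + 1) : ℝ) = ((2 * ((i : ℕ) + 1) : ℕ) : ℝ) := by push_cast; ring
      rw [hcast2, ← Real.rpow_def_of_pos hpos, Real.rpow_natCast]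
      have hcast : ((m : ℝ) + 1) - j = ((m + 1 : ℕ) : ℝ) - j := by push_cast; ring
      rw [hcast]
  have hcnonzero : ∀ i, i < m + 1 → c i ≠ 0 := by
    intro i _
    refine mul_ne_zero (pow_ne_zero _ (by norm_num)) ?_
    exact_mod_cast (Nat.choose_pos (by omega : m - i ≤ 2 * (m + 1))).ne'
  have hμmono : ∀ i j, i < j → j < m + 1 → μ i < μ j := by
    intro i j hij _
    simp only [hμ]
    have : (i : ℝ) < j := by exact_mod_cast hij
    exact Real.log_lt_log (by positivity) (by linarith)
  have hxmono : StrictMono x := by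
    intro a b hab
    have hab' : (a : ℕ) < (b : ℕ) := hab
    have hb : (b : ℕ) < m + 1 := b.isLt
    simp only [hx]
    by_cases hbm : (b : ℕ) = m
    · rw [if_pos hbm, if_neg (by omega)]
      have h1 : ((a : ℕ) : ℝ) + 1 ≤ m := by exact_mod_cast (by omega : (a : ℕ) + 1 ≤ m)
      linarith
    · rw [if_neg hbm, if_neg (by omega)]
      have : ((a : ℕ) : ℝ) < (b : ℕ) := by exact_mod_cast hab'
      linarith
  exact expsum_no_zeros m c μ hcnonzero hμmono x hxmono hzero
end

section
/- Let E be an infinite-dimensional separable real Hilbert space and let R : E → E be a surjective linear isometry. Then the map Φ : W_2(E) → W_2(E), μ ↦ (t_{m(μ)} ∘ R ∘ t_{−m(μ)})_# μ, is an isometry of the quadratic Wasserstein space W_2(E): it is a bijection and satisfies d_{W_2}(Φ(μ),Φ(ν)) = d_{W_2}(μ,ν) for all μ,ν ∈ W_2(E). -/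
open MeasureTheory ENNReal Topology Filter
open scoped RealInnerProductSpace

noncomputable section

namespace RotAux

lemma sq4 (a b : ℝ≥0∞) : (a + b) ^ (2:ℝ) ≤ 4 * a ^ (2:ℝ) + 4 * b ^ (2:ℝ) := by
  have hmax : (max a b) ^ (2:ℝ) ≤ a ^ (2:ℝ) + b ^ (2:ℝ) := by
    rcases le_total a b with h | h
    · rw [max_eq_right h]; exact le_add_self
    · rw [max_eq_left h]; exact le_self_add
  calc (a + b) ^ (2:ℝ) ≤ (2 * max a b) ^ (2:ℝ) := by
        refine ENNReal.rpow_le_rpow ?_ (by norm_num)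
        rcases le_total a b with h | h
        · rw [max_eq_right h, two_mul]; exact add_le_add_left h b
        · rw [max_eq_left h, two_mul]; exact add_le_add_right h a
    _ = 4 * (max a b) ^ (2:ℝ) := by
        rw [ENNReal.mul_rpow_of_nonneg _ _ (by norm_num : (0:ℝ) ≤ 2)]
        congr 1
        rw [show ((2:ℝ)) = ((2:ℕ):ℝ) by norm_num, ENNReal.rpow_natCast]
        norm_num
    _ ≤ 4 * (a ^ (2:ℝ) + b ^ (2:ℝ)) := by gcongr
    _ = 4 * a ^ (2:ℝ) + 4 * b ^ (2:ℝ) := by ring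

variable {E : Type*} [NormedAddCommGroup E] [InnerProductSpace ℝ E] [CompleteSpace E]
    [SecondCountableTopology E] [MeasurableSpace E] [BorelSpace E]

/-- rotation `S` around the point `c`. -/
def aff (S : E ≃ₗᵢ[ℝ] E) (c : E) : E → E := fun x => S (x - c) + c

lemma aff_cont (S : E ≃ₗᵢ[ℝ] E) (c : E) : Continuous (aff S c) :=
  (S.continuous.comp (continuous_id.sub continuous_const)).add continuous_const

lemma aff_meas (S : E ≃ₗᵢ[ℝ] E) (c : E) : Measurable (aff S c) :=
  (aff_cont S c).measurable

lemma aff_comp (S : E ≃ₗᵢ[ℝ] E) (c : E) (x : E) : aff S.symm c (aff S c x) = x := by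
  simp [aff]

lemma edist_aff (S : E ≃ₗᵢ[ℝ] E) (c : E) (x y : E) :
    edist (aff S c x) (aff S c y) = edist x y := by
  have h : aff S c x - aff S c y = S (x - y) := by
    simp only [aff, map_sub]; abel
  rw [edist_eq_enorm_sub, edist_eq_enorm_sub, h, enorm_eq_nnnorm, enorm_eq_nnnorm, S.nnnorm_map]

lemma moment_shift (μ : Measure E) [IsProbabilityMeasure μ] {x₀ : E} (x₁ : E)
    (h : ∫⁻ x, edist x x₀ ^ (2:ℝ) ∂μ ≠ ⊤) : ∫⁻ x, edist x x₁ ^ (2:ℝ) ∂μ ≠ ⊤ := by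
  have hmeas : Measurable fun x : E => 4 * edist x x₀ ^ (2:ℝ) :=
    ((continuous_id.edist continuous_const).measurable.pow_const _).const_mul 4
  have hle : ∫⁻ x, edist x x₁ ^ (2:ℝ) ∂μ
      ≤ 4 * ∫⁻ x, edist x x₀ ^ (2:ℝ) ∂μ + 4 * edist x₀ x₁ ^ (2:ℝ) := by
    calc ∫⁻ x, edist x x₁ ^ (2:ℝ) ∂μ
        ≤ ∫⁻ x, (4 * edist x x₀ ^ (2:ℝ) + 4 * edist x₀ x₁ ^ (2:ℝ)) ∂μ := by
          refine lintegral_mono fun x => ?_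
          exact le_trans (ENNReal.rpow_le_rpow (edist_triangle x x₀ x₁) (by norm_num)) (sq4 _ _)
      _ = 4 * ∫⁻ x, edist x x₀ ^ (2:ℝ) ∂μ + 4 * edist x₀ x₁ ^ (2:ℝ) := by
          rw [lintegral_add_left hmeas, lintegral_const, measure_univ, mul_one,
            lintegral_const_mul' _ _ (by norm_num)]
  refine ne_top_of_le_ne_top ?_ hle
  refine ENNReal.add_ne_top.2 ⟨ENNReal.mul_ne_top (by norm_num) h, ENNReal.mul_ne_top (by norm_num) ?_⟩
  exact ENNReal.rpow_ne_top_of_nonneg (by norm_num) (edist_ne_top _ _)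

lemma integrable_id_of_memWp (μ : Measure E) (hμ : MemWp 2 μ) : Integrable (fun x : E => x) μ := by
  obtain ⟨hp, x₀, hm⟩ := hμ
  have hm0 : ∫⁻ x, edist x (0:E) ^ (2:ℝ) ∂μ ≠ ⊤ := moment_shift μ (0:E) hm
  refine ⟨aestronglyMeasurable_id, ?_⟩
  rw [hasFiniteIntegral_iff_norm]
  have hb : ∀ x : E, ENNReal.ofReal ‖x‖ ≤ 1 + edist x (0:E) ^ (2:ℝ) := by
    intro x
    have hx : ENNReal.ofReal ‖x‖ = edist x (0:E) := by
      rw [edist_eq_enorm_sub, sub_zero, ← ofReal_norm]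
    rw [hx]
    rcases le_total (edist x (0:E)) 1 with h | h
    · exact le_add_right (le_trans h le_rfl)
    · calc edist x 0 = edist x 0 ^ (1:ℝ) := (ENNReal.rpow_one _).symm
        _ ≤ edist x 0 ^ (2:ℝ) := ENNReal.rpow_le_rpow_of_exponent_le h (by norm_num)
        _ ≤ 1 + edist x 0 ^ (2:ℝ) := le_add_self
  have hmeas : Measurable fun _ : E => (1:ℝ≥0∞) := measurable_const
  calc ∫⁻ x, ENNReal.ofReal ‖x‖ ∂μ ≤ ∫⁻ x, (1 + edist x (0:E) ^ (2:ℝ)) ∂μ := lintegral_mono hb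
    _ = 1 + ∫⁻ x, edist x (0:E) ^ (2:ℝ) ∂μ := by
        rw [lintegral_add_left hmeas, lintegral_const, measure_univ, mul_one]
    _ < ⊤ := by
        rw [lt_top_iff_ne_top]
        exact ENNReal.add_ne_top.2 ⟨one_ne_top, hm0⟩

lemma bary_map (μ : Measure E) (hμ : MemWp 2 μ) (S : E ≃ₗᵢ[ℝ] E) (c : E) :
    ∫ y, y ∂(μ.map (aff S c)) = S ((∫ y, y ∂μ) - c) + c := by
  haveI := hμ.1
  have hint := integrable_id_of_memWp μ hμ
  rw [integral_map (φ := aff S c) (aff_meas S c).aemeasurable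
    (f := fun y => y) aestronglyMeasurable_id]
  have hco : ∀ v : E, (S : E →L[ℝ] E) v = S v := fun _ => rfl
  have hfun : ∀ x : E, aff S c x = (S : E →L[ℝ] E) x + (c - S c) := by
    intro x
    simp only [aff, map_sub, hco]
    abel
  simp_rw [hfun]
  rw [integral_add ((S : E →L[ℝ] E).integrable_comp hint) (integrable_const _),
    integral_const, probReal_univ, one_smul,
    ContinuousLinearMap.integral_comp_comm _ hint]
  simp only [hco, map_sub]
  abel

lemma bary_fixed (μ : Measure E) (hμ : MemWp 2 μ) (S : E ≃ₗᵢ[ℝ] E) :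
    ∫ y, y ∂(μ.map (aff S (∫ y, y ∂μ))) = ∫ y, y ∂μ := by
  rw [bary_map μ hμ S]; simp

lemma memWp_map (μ : Measure E) (hμ : MemWp 2 μ) (S : E ≃ₗᵢ[ℝ] E) (c : E) :
    MemWp 2 (μ.map (aff S c)) := by
  haveI := hμ.1
  obtain ⟨x₀, hx₀⟩ := hμ.2
  refine ⟨Measure.isProbabilityMeasure_map (aff_meas S c).aemeasurable, aff S c x₀, ?_⟩
  have hmeas : Measurable fun x : E => edist x (aff S c x₀) ^ (2:ℝ) :=
    (continuous_id.edist continuous_const).measurable.pow_const _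
  rw [lintegral_map hmeas (aff_meas S c)]
  simp_rw [edist_aff]
  exact hx₀

lemma map_aff_symm (μ : Measure E) (S : E ≃ₗᵢ[ℝ] E) (c : E) :
    (μ.map (aff S c)).map (aff S.symm c) = μ := by
  rw [Measure.map_map (aff_meas _ _) (aff_meas _ _)]
  have h : aff S.symm c ∘ aff S c = id := funext fun x => aff_comp S c x
  rw [h, Measure.map_id]

lemma edist_sq_ofReal (u v : E) : edist u v ^ (2:ℝ) = ENNReal.ofReal (‖u - v‖ ^ 2) := by
  rw [edist_eq_enorm_sub, ← ofReal_norm,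
    ENNReal.ofReal_rpow_of_nonneg (norm_nonneg _) (by norm_num)]
  congr 1
  rw [show ((2:ℝ)) = ((2:ℕ):ℝ) by norm_num, Real.rpow_natCast]

lemma cost_eq (μ ν : Measure E) (hμ : MemWp 2 μ) (hν : MemWp 2 ν) (R : E ≃ₗᵢ[ℝ] E)
    (π : Measure (E × E)) (h1 : π.map Prod.fst = μ) (h2 : π.map Prod.snd = ν) :
    ∫⁻ z : E × E, edist (aff R (∫ y, y ∂μ) z.1) (aff R (∫ y, y ∂ν) z.2) ^ (2:ℝ) ∂π
      = ∫⁻ z : E × E, edist z.1 z.2 ^ (2:ℝ) ∂π := by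
  haveI hπ : IsProbabilityMeasure π := by
    haveI := hμ.1
    constructor
    have h := congrArg (fun m : Measure E => m Set.univ) h1
    simp only [Measure.map_apply measurable_fst MeasurableSet.univ, Set.preimage_univ] at h
    rw [h, measure_univ]
  set a := ∫ y, y ∂μ with ha
  set b := ∫ y, y ∂ν with hb
  set d := a - b with hd
  have hdiff : ∀ z : E × E, aff R a z.1 - aff R b z.2 = R ((z.1 - z.2) - d) + d := by
    intro z; simp only [aff, map_sub, hd]; abel
  have hcost' : ∀ z : E × E,
      edist (aff R a z.1) (aff R b z.2) = (‖R ((z.1 - z.2) - d) + d‖₊ : ℝ≥0∞) := by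
    intro z; rw [edist_eq_enorm_sub, hdiff, enorm_eq_nnnorm]
  have hb1 : ∀ z : E × E,
      edist (aff R a z.1) (aff R b z.2) ≤ edist z.1 z.2 + 2 * (‖d‖₊ : ℝ≥0∞) := by
    intro z
    rw [hcost' z, edist_eq_enorm_sub, enorm_eq_nnnorm]
    have key : ‖R ((z.1 - z.2) - d) + d‖₊ ≤ ‖z.1 - z.2‖₊ + 2 * ‖d‖₊ := by
      calc ‖R ((z.1 - z.2) - d) + d‖₊ ≤ ‖R ((z.1 - z.2) - d)‖₊ + ‖d‖₊ := nnnorm_add_le _ _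
        _ = ‖(z.1 - z.2) - d‖₊ + ‖d‖₊ := by rw [R.nnnorm_map]
        _ ≤ (‖z.1 - z.2‖₊ + ‖d‖₊) + ‖d‖₊ := by gcongr; exact nnnorm_sub_le _ _
        _ = ‖z.1 - z.2‖₊ + 2 * ‖d‖₊ := by ring
    exact_mod_cast key
  have hb2 : ∀ z : E × E,
      edist z.1 z.2 ≤ edist (aff R a z.1) (aff R b z.2) + 2 * (‖d‖₊ : ℝ≥0∞) := by
    intro z
    rw [hcost' z, edist_eq_enorm_sub, enorm_eq_nnnorm]
    have key : ‖z.1 - z.2‖₊ ≤ ‖R ((z.1 - z.2) - d) + d‖₊ + 2 * ‖d‖₊ := by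
      calc ‖z.1 - z.2‖₊ = ‖((z.1 - z.2) - d) + d‖₊ := by rw [sub_add_cancel]
        _ ≤ ‖(z.1 - z.2) - d‖₊ + ‖d‖₊ := nnnorm_add_le _ _
        _ = ‖R ((z.1 - z.2) - d)‖₊ + ‖d‖₊ := by rw [R.nnnorm_map]
        _ = ‖(R ((z.1 - z.2) - d) + d) - d‖₊ + ‖d‖₊ := by rw [add_sub_cancel_right]
        _ ≤ (‖R ((z.1 - z.2) - d) + d‖₊ + ‖d‖₊) + ‖d‖₊ := by gcongr; exact nnnorm_sub_le _ _
        _ = ‖R ((z.1 - z.2) - d) + d‖₊ + 2 * ‖d‖₊ := by ring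
    exact_mod_cast key
  have m1 : Measurable fun z : E × E => edist (aff R a z.1) (aff R b z.2) ^ (2:ℝ) :=
    (((aff_cont R a).comp continuous_fst).edist
      ((aff_cont R b).comp continuous_snd)).measurable.pow_const _
  have m2 : Measurable fun z : E × E => edist z.1 z.2 ^ (2:ℝ) :=
    (continuous_fst.edist continuous_snd).measurable.pow_const _
  set C : ℝ≥0∞ := 4 * (2 * (‖d‖₊ : ℝ≥0∞)) ^ (2:ℝ) with hC
  have hCfin : C ≠ ⊤ := by
    refine ENNReal.mul_ne_top (by norm_num) (ENNReal.rpow_ne_top_of_nonneg (by norm_num) ?_)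
    exact ENNReal.mul_ne_top (by norm_num) coe_ne_top
  have key1 : ∫⁻ z : E × E, edist (aff R a z.1) (aff R b z.2) ^ (2:ℝ) ∂π
      ≤ 4 * ∫⁻ z : E × E, edist z.1 z.2 ^ (2:ℝ) ∂π + C := by
    calc ∫⁻ z : E × E, edist (aff R a z.1) (aff R b z.2) ^ (2:ℝ) ∂π
        ≤ ∫⁻ z : E × E, (4 * edist z.1 z.2 ^ (2:ℝ) + 4 * (2 * (‖d‖₊:ℝ≥0∞)) ^ (2:ℝ)) ∂π := by
          refine lintegral_mono fun z => ?_
          exact le_trans (ENNReal.rpow_le_rpow (hb1 z) (by norm_num)) (sq4 _ _)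
      _ = 4 * ∫⁻ z : E × E, edist z.1 z.2 ^ (2:ℝ) ∂π + C := by
          rw [lintegral_add_left (m2.const_mul 4), lintegral_const, measure_univ, mul_one,
            lintegral_const_mul' _ _ (by norm_num)]
  have key2 : ∫⁻ z : E × E, edist z.1 z.2 ^ (2:ℝ) ∂π
      ≤ 4 * ∫⁻ z : E × E, edist (aff R a z.1) (aff R b z.2) ^ (2:ℝ) ∂π + C := by
    calc ∫⁻ z : E × E, edist z.1 z.2 ^ (2:ℝ) ∂π
        ≤ ∫⁻ z : E × E,
            (4 * edist (aff R a z.1) (aff R b z.2) ^ (2:ℝ) + 4 * (2 * (‖d‖₊:ℝ≥0∞)) ^ (2:ℝ)) ∂π := by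
          refine lintegral_mono fun z => ?_
          exact le_trans (ENNReal.rpow_le_rpow (hb2 z) (by norm_num)) (sq4 _ _)
      _ = 4 * ∫⁻ z : E × E, edist (aff R a z.1) (aff R b z.2) ^ (2:ℝ) ∂π + C := by
          rw [lintegral_add_left (m1.const_mul 4), lintegral_const, measure_univ, mul_one,
            lintegral_const_mul' _ _ (by norm_num)]
  by_cases hI2 : ∫⁻ z : E × E, edist z.1 z.2 ^ (2:ℝ) ∂π = ⊤
  · rw [hI2, eq_top_iff]
    by_contra hlt
    push_neg at hlt
    have hI1 : ∫⁻ z : E × E, edist (aff R a z.1) (aff R b z.2) ^ (2:ℝ) ∂π ≠ ⊤ := hlt.ne_top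
    have : (⊤:ℝ≥0∞) ≤ 4 * ∫⁻ z : E × E, edist (aff R a z.1) (aff R b z.2) ^ (2:ℝ) ∂π + C := by
      rw [← hI2]; exact key2
    exact (ENNReal.add_ne_top.2 ⟨ENNReal.mul_ne_top (by norm_num) hI1, hCfin⟩) (top_le_iff.1 this)
  · have hI1 : ∫⁻ z : E × E, edist (aff R a z.1) (aff R b z.2) ^ (2:ℝ) ∂π ≠ ⊤ :=
      ne_top_of_le_ne_top (ENNReal.add_ne_top.2 ⟨ENNReal.mul_ne_top (by norm_num) hI2, hCfin⟩) key1
    -- pass to Bochner integrals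
    have hia : Integrable (fun z : E × E => z.1) π := by
      have h := integrable_id_of_memWp μ hμ
      rw [← h1] at h
      exact (integrable_map_measure aestronglyMeasurable_id measurable_fst.aemeasurable).1 h
    have hib : Integrable (fun z : E × E => z.2) π := by
      have h := integrable_id_of_memWp ν hν
      rw [← h2] at h
      exact (integrable_map_measure aestronglyMeasurable_id measurable_snd.aemeasurable).1 h
    have hw : Integrable (fun z : E × E => z.1 - z.2) π := hia.sub hib
    have hwa : ∫ z : E × E, z.1 ∂π = a := by
      rw [ha, ← h1, integral_map (φ := Prod.fst) measurable_fst.aemeasurable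
        (f := fun y => y) aestronglyMeasurable_id]
    have hwb : ∫ z : E × E, z.2 ∂π = b := by
      rw [hb, ← h2, integral_map (φ := Prod.snd) measurable_snd.aemeasurable
        (f := fun y => y) aestronglyMeasurable_id]
    have hwd : ∫ z : E × E, (z.1 - z.2) ∂π = d := by
      rw [integral_sub hia hib, hwa, hwb]
    set T : E →L[ℝ] ℝ := (innerSL ℝ d).comp (R : E →L[ℝ] E) with hT
    set K : E →L[ℝ] ℝ := innerSL ℝ d with hK
    have hTv : ∀ v : E, T v = ⟪R v, d⟫ := by
      intro v; rw [hT]; simp [innerSL_apply_apply]; exact real_inner_comm _ _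
    have hKv : ∀ v : E, K v = ⟪v, d⟫ := by
      intro v; rw [hK]; simp [innerSL_apply_apply]; exact real_inner_comm _ _
    have hpt : ∀ z : E × E, ‖aff R a z.1 - aff R b z.2‖ ^ 2
        = ‖z.1 - z.2‖ ^ 2
          + (2 * T (z.1 - z.2) - 2 * K (z.1 - z.2) + (2 * ‖d‖ ^ 2 - 2 * ⟪R d, d⟫)) := by
      intro z
      rw [hdiff z, norm_add_sq_real, R.norm_map, norm_sub_sq_real, map_sub R, hTv, hKv]
      simp only [inner_sub_left]
      ring
    have hGInt : Integrable (fun z : E × E => ‖z.1 - z.2‖ ^ 2) π := by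
      refine ⟨((continuous_fst.sub continuous_snd).norm.pow 2).aestronglyMeasurable, ?_⟩
      rw [hasFiniteIntegral_iff_ofReal (Filter.Eventually.of_forall fun z => by positivity)]
      simp_rw [← edist_sq_ofReal]
      exact Ne.lt_top hI2
    have hFInt : Integrable (fun z : E × E => ‖aff R a z.1 - aff R b z.2‖ ^ 2) π := by
      refine ⟨((((aff_cont R a).comp continuous_fst).sub
        ((aff_cont R b).comp continuous_snd)).norm.pow 2).aestronglyMeasurable, ?_⟩
      rw [hasFiniteIntegral_iff_ofReal (Filter.Eventually.of_forall fun z => by positivity)]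
      simp_rw [← edist_sq_ofReal]
      exact Ne.lt_top hI1
    have hLin : Integrable (fun z : E × E =>
        2 * T (z.1 - z.2) - 2 * K (z.1 - z.2) + (2 * ‖d‖ ^ 2 - 2 * ⟪R d, d⟫)) π := by
      refine Integrable.add ?_ (integrable_const _)
      exact ((T.integrable_comp hw).const_mul 2).sub ((K.integrable_comp hw).const_mul 2)
    have hIeq : ∫ z : E × E, ‖aff R a z.1 - aff R b z.2‖ ^ 2 ∂π
        = ∫ z : E × E, ‖z.1 - z.2‖ ^ 2 ∂π := by
      calc ∫ z : E × E, ‖aff R a z.1 - aff R b z.2‖ ^ 2 ∂π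
          = ∫ z : E × E, (‖z.1 - z.2‖ ^ 2
              + (2 * T (z.1 - z.2) - 2 * K (z.1 - z.2) + (2 * ‖d‖ ^ 2 - 2 * ⟪R d, d⟫))) ∂π := by
            exact integral_congr_ae (Filter.Eventually.of_forall hpt)
        _ = ∫ z : E × E, ‖z.1 - z.2‖ ^ 2 ∂π
              + ∫ z : E × E, (2 * T (z.1 - z.2) - 2 * K (z.1 - z.2)
                + (2 * ‖d‖ ^ 2 - 2 * ⟪R d, d⟫)) ∂π := integral_add hGInt hLin
        _ = ∫ z : E × E, ‖z.1 - z.2‖ ^ 2 ∂π := by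
            have hz : ∫ z : E × E, (2 * T (z.1 - z.2) - 2 * K (z.1 - z.2)
                + (2 * ‖d‖ ^ 2 - 2 * ⟪R d, d⟫)) ∂π = 0 := by
              have hm1 : Integrable (fun z : E × E => 2 * T (z.1 - z.2)) π :=
                (T.integrable_comp hw).const_mul 2
              have hm2 : Integrable (fun z : E × E => 2 * K (z.1 - z.2)) π :=
                (K.integrable_comp hw).const_mul 2
              have hsub : Integrable
                  (fun z : E × E => 2 * T (z.1 - z.2) - 2 * K (z.1 - z.2)) π := hm1.sub hm2
              have hTd : ∫ z : E × E, T (z.1 - z.2) ∂π = T d := by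
                rw [← hwd]; exact T.integral_comp_comm hw
              have hKd : ∫ z : E × E, K (z.1 - z.2) ∂π = K d := by
                rw [← hwd]; exact K.integral_comp_comm hw
              rw [integral_add hsub (integrable_const _), integral_sub hm1 hm2,
                integral_const_mul, integral_const_mul, hTd, hKd,
                integral_const, probReal_univ, one_smul,
                hTv, hKv, real_inner_self_eq_norm_sq]
              ring
            rw [hz, add_zero]
    calc ∫⁻ z : E × E, edist (aff R a z.1) (aff R b z.2) ^ (2:ℝ) ∂π
        = ∫⁻ z : E × E, ENNReal.ofReal (‖aff R a z.1 - aff R b z.2‖ ^ 2) ∂π := by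
          simp_rw [edist_sq_ofReal]
      _ = ENNReal.ofReal (∫ z : E × E, ‖aff R a z.1 - aff R b z.2‖ ^ 2 ∂π) :=
          (ofReal_integral_eq_lintegral_ofReal hFInt
            (Filter.Eventually.of_forall fun z => by positivity)).symm
      _ = ENNReal.ofReal (∫ z : E × E, ‖z.1 - z.2‖ ^ 2 ∂π) := by rw [hIeq]
      _ = ∫⁻ z : E × E, ENNReal.ofReal (‖z.1 - z.2‖ ^ 2) ∂π :=
          ofReal_integral_eq_lintegral_ofReal hGInt
            (Filter.Eventually.of_forall fun z => by positivity)
      _ = ∫⁻ z : E × E, edist z.1 z.2 ^ (2:ℝ) ∂π := by simp_rw [edist_sq_ofReal]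

lemma aff_comp' (S : E ≃ₗᵢ[ℝ] E) (c : E) (x : E) : aff S c (aff S.symm c x) = x := by
  have h := aff_comp S.symm c x
  rwa [S.symm_symm] at h

lemma map_aff_symm' (μ : Measure E) (S : E ≃ₗᵢ[ℝ] E) (c : E) :
    (μ.map (aff S.symm c)).map (aff S c) = μ := by
  have h := map_aff_symm μ S.symm c
  rwa [S.symm_symm] at h

/-- `aff S c` as a measurable equivalence. -/
def affME (S : E ≃ₗᵢ[ℝ] E) (c : E) : E ≃ᵐ E :=
  Homeomorph.toMeasurableEquiv
    (((Homeomorph.subRight c).trans S.toHomeomorph).trans (Homeomorph.addRight c))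

lemma affME_apply (S : E ≃ₗᵢ[ℝ] E) (c : E) (x : E) : affME S c x = aff S c x := rfl

lemma affME_symm_apply (S : E ≃ₗᵢ[ℝ] E) (c : E) (x : E) :
    (affME S c).symm x = aff S.symm c x := by
  apply (affME S c).injective
  rw [MeasurableEquiv.apply_symm_apply, affME_apply, aff_comp']

lemma iInf_couplings (R : E ≃ₗᵢ[ℝ] E) (μ ν : Measure E) (hμ : MemWp 2 μ) (hν : MemWp 2 ν) :
    (⨅ π ∈ {π : Measure (E × E) | π.map Prod.fst = μ.map (aff R (∫ y, y ∂μ))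
        ∧ π.map Prod.snd = ν.map (aff R (∫ y, y ∂ν))},
      ∫⁻ z : E × E, edist z.1 z.2 ^ (2:ℝ) ∂π)
    = ⨅ π ∈ {π : Measure (E × E) | π.map Prod.fst = μ ∧ π.map Prod.snd = ν},
      ∫⁻ z : E × E, edist z.1 z.2 ^ (2:ℝ) ∂π := by
  set a := ∫ y, y ∂μ with ha
  set b := ∫ y, y ∂ν with hb
  set e : (E × E) ≃ᵐ (E × E) := (affME R a).prodCongr (affME R b) with he
  have hee : ∀ z : E × E, e z = (aff R a z.1, aff R b z.2) := fun z => rfl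
  have hes : ∀ z : E × E, e.symm z = (aff R.symm a z.1, aff R.symm b z.2) := by
    intro z
    rw [show e.symm z = ((affME R a).symm z.1, (affME R b).symm z.2) from rfl,
      affME_symm_apply, affME_symm_apply]
  have m2' : Measurable fun z : E × E => edist z.1 z.2 ^ (2:ℝ) :=
    (continuous_fst.edist continuous_snd).measurable.pow_const _
  apply le_antisymm
  · refine le_iInf₂ fun π hπ => ?_
    have hmem : (π.map e).map Prod.fst = μ.map (aff R a)
        ∧ (π.map e).map Prod.snd = ν.map (aff R b) := by
      constructor
      · rw [Measure.map_map measurable_fst e.measurable]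
        have hc : (Prod.fst ∘ ⇑e) = aff R a ∘ Prod.fst :=
          funext fun z => by simp only [Function.comp_apply, hee]
        rw [hc, ← Measure.map_map (aff_meas R a) measurable_fst, hπ.1]
      · rw [Measure.map_map measurable_snd e.measurable]
        have hc : (Prod.snd ∘ ⇑e) = aff R b ∘ Prod.snd :=
          funext fun z => by simp only [Function.comp_apply, hee]
        rw [hc, ← Measure.map_map (aff_meas R b) measurable_snd, hπ.2]
    refine le_trans (iInf₂_le (π.map e) hmem) ?_
    rw [lintegral_map m2' e.measurable]
    apply le_of_eq
    calc ∫⁻ z : E × E, edist (e z).1 (e z).2 ^ (2:ℝ) ∂π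
        = ∫⁻ z : E × E, edist (aff R a z.1) (aff R b z.2) ^ (2:ℝ) ∂π := by
          refine lintegral_congr fun z => ?_; rw [hee]
      _ = ∫⁻ z : E × E, edist z.1 z.2 ^ (2:ℝ) ∂π := cost_eq μ ν hμ hν R π hπ.1 hπ.2
  · refine le_iInf₂ fun π hπ => ?_
    have hmem : (π.map e.symm).map Prod.fst = μ ∧ (π.map e.symm).map Prod.snd = ν := by
      constructor
      · rw [Measure.map_map measurable_fst e.symm.measurable]
        have hc : (Prod.fst ∘ ⇑e.symm) = aff R.symm a ∘ Prod.fst :=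
          funext fun z => by simp only [Function.comp_apply, hes]
        rw [hc, ← Measure.map_map (aff_meas R.symm a) measurable_fst, hπ.1, map_aff_symm]
      · rw [Measure.map_map measurable_snd e.symm.measurable]
        have hc : (Prod.snd ∘ ⇑e.symm) = aff R.symm b ∘ Prod.snd :=
          funext fun z => by simp only [Function.comp_apply, hes]
        rw [hc, ← Measure.map_map (aff_meas R.symm b) measurable_snd, hπ.2, map_aff_symm]
    refine le_trans (iInf₂_le (π.map e.symm) hmem) ?_
    apply le_of_eq
    have hkey := cost_eq μ ν hμ hν R (π.map e.symm) hmem.1 hmem.2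
    have m1' : Measurable fun z : E × E => edist (aff R a z.1) (aff R b z.2) ^ (2:ℝ) :=
      (((aff_cont R a).comp continuous_fst).edist
        ((aff_cont R b).comp continuous_snd)).measurable.pow_const _
    rw [← hkey, lintegral_map m1' e.symm.measurable]
    refine lintegral_congr fun z => ?_
    rw [hes]
    simp only [aff_comp']

end RotAux

open RotAux in
/-- for a surjective linear isometry `R` of an infinite-dimensional separable
real Hilbert space `E`, the map `μ ↦ (t_{m(μ)} ∘ R ∘ t_{-m(μ)})_# μ` ("rotation around the
barycenter") is an isometry of `W₂(E)`. -/
theorem rotation_around_barycenter_isometry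
    {E : Type*} [NormedAddCommGroup E] [InnerProductSpace ℝ E] [CompleteSpace E]
    [SecondCountableTopology E] [MeasurableSpace E] [BorelSpace E]
    (hinf : ¬ FiniteDimensional ℝ E)
    (R : E ≃ₗᵢ[ℝ] E)
    (Φ : Measure E → Measure E)
    (hΦ : ∀ μ : Measure E, Φ μ = μ.map (fun x => R (x - ∫ y, y ∂μ) + ∫ y, y ∂μ)) :
    (∀ μ : Measure E, MemWp 2 μ → MemWp 2 (Φ μ)) ∧
    Set.BijOn Φ {μ : Measure E | MemWp 2 μ} {μ : Measure E | MemWp 2 μ} ∧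
    (∀ μ ν : Measure E, MemWp 2 μ → MemWp 2 ν →
      wassersteinDist 2 (Φ μ) (Φ ν) = wassersteinDist 2 μ ν) := by
  have hΦ' : ∀ μ : Measure E, Φ μ = μ.map (aff R (∫ y, y ∂μ)) := hΦ
  have hmaps : ∀ μ : Measure E, MemWp 2 μ → MemWp 2 (Φ μ) := by
    intro μ hμ
    rw [hΦ' μ]
    exact memWp_map μ hμ R _
  have hbaryΦ : ∀ μ : Measure E, MemWp 2 μ → ∫ y, y ∂(Φ μ) = ∫ y, y ∂μ := by
    intro μ hμ
    rw [hΦ' μ]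
    exact bary_fixed μ hμ R
  refine ⟨hmaps, ⟨fun μ hμ => hmaps μ hμ, ?_, ?_⟩, ?_⟩
  · -- injectivity
    intro μ hμ ν hν h
    have hab : ∫ y, y ∂μ = ∫ y, y ∂ν := by
      rw [← hbaryΦ μ hμ, h, hbaryΦ ν hν]
    calc μ = (Φ μ).map (aff R.symm (∫ y, y ∂μ)) := by
          rw [hΦ' μ]; exact (map_aff_symm μ R _).symm
      _ = (Φ ν).map (aff R.symm (∫ y, y ∂ν)) := by rw [h, hab]
      _ = ν := by rw [hΦ' ν]; exact map_aff_symm ν R _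
  · -- surjectivity
    intro ν hν
    refine ⟨ν.map (aff R.symm (∫ y, y ∂ν)), memWp_map ν hν R.symm _, ?_⟩
    have hbary : ∫ y, y ∂(ν.map (aff R.symm (∫ y, y ∂ν))) = ∫ y, y ∂ν :=
      bary_fixed ν hν R.symm
    rw [hΦ' _, hbary]
    exact map_aff_symm' ν R _
  · -- distances
    intro μ ν hμ hν
    have hinfeq := iInf_couplings R μ ν hμ hν
    rw [wassersteinDist, wassersteinDist]
    congr 1
    rw [hΦ' μ, hΦ' ν]
    exact hinfeq
end
end
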